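/- arXiv:1908.00695 — 5 statements merged into one kernel-verified Lean document; each statement's English description precedes it below -/
import Mathlib

section
/- Let D ⊂ ℝ^r be a bounded set and β ≥ 1. If f ∈ C_r^β(D) maps to ℝ^q and g ∈ C_q^β(ℝ^q), then the composition g ∘ f belongs to C_r^β(D). -/
open Finset

namespace HolderAux

open Finset MvPolynomial

variable {n m : ℕ}

/-- ℓ¹-norm of coefficients of a multivariate polynomial. -/
noncomputable def nnp (p : MvPolynomial (Fin n) ℝ) : ℝ :=
  ∑ γ ∈ p.support, |p.coeff γ|

lemma nnp_nonneg (p : MvPolynomial (Fin n) ℝ) : 0 ≤ nnp p :=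
  Finset.sum_nonneg fun _ _ => abs_nonneg _

lemma nnp_eq_sum_superset {p : MvPolynomial (Fin n) ℝ} {s : Finset (Fin n →₀ ℕ)}
    (h : p.support ⊆ s) : nnp p = ∑ γ ∈ s, |p.coeff γ| := by
  refine Finset.sum_subset h fun γ _ hγ => ?_
  rw [MvPolynomial.notMem_support_iff.mp hγ, abs_zero]

lemma abs_coeff_le_nnp (p : MvPolynomial (Fin n) ℝ) (γ : Fin n →₀ ℕ) :
    |p.coeff γ| ≤ nnp p := by
  by_cases h : γ ∈ p.support
  · exact Finset.single_le_sum (f := fun γ => |p.coeff γ|) (fun _ _ => abs_nonneg _) h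
  · rw [MvPolynomial.notMem_support_iff.mp h, abs_zero]; exact nnp_nonneg p

lemma nnp_add_le (p q : MvPolynomial (Fin n) ℝ) : nnp (p + q) ≤ nnp p + nnp q := by
  classical
  rw [nnp_eq_sum_superset (s := p.support ∪ q.support) (MvPolynomial.support_add),
    nnp_eq_sum_superset (s := p.support ∪ q.support) Finset.subset_union_left,
    nnp_eq_sum_superset (s := p.support ∪ q.support) Finset.subset_union_right,
    ← Finset.sum_add_distrib]
  exact Finset.sum_le_sum fun γ _ => by
    simpa [MvPolynomial.coeff_add] using abs_add_le (p.coeff γ) (q.coeff γ)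

lemma nnp_sum_le {ι : Type*} (s : Finset ι) (f : ι → MvPolynomial (Fin n) ℝ) :
    nnp (∑ i ∈ s, f i) ≤ ∑ i ∈ s, nnp (f i) := by
  classical
  induction s using Finset.induction_on with
  | empty => simp [nnp]
  | @insert _ _ h ih =>
      rw [Finset.sum_insert h, Finset.sum_insert h]
      exact (nnp_add_le _ _).trans (by gcongr)

lemma nnp_monomial_le (γ : Fin n →₀ ℕ) (c : ℝ) : nnp (monomial γ c) ≤ |c| := by
  classical
  calc nnp (monomial γ c) = ∑ γ' ∈ {γ}, |(monomial γ c).coeff γ'| :=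
        nnp_eq_sum_superset (MvPolynomial.support_monomial_subset)
    _ ≤ |c| := by simp [MvPolynomial.coeff_monomial]

lemma nnp_mul_monomial_le (p : MvPolynomial (Fin n) ℝ) (γ : Fin n →₀ ℕ) (c : ℝ) :
    nnp (p * monomial γ c) ≤ nnp p * |c| := by
  classical
  conv_lhs => rw [← MvPolynomial.support_sum_monomial_coeff p, Finset.sum_mul]
  refine (nnp_sum_le _ _).trans ?_
  rw [nnp, Finset.sum_mul]
  refine Finset.sum_le_sum fun u hu => ?_
  rw [MvPolynomial.monomial_mul]
  exact (nnp_monomial_le _ _).trans (le_of_eq (abs_mul _ _))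

lemma nnp_mul_le (p q : MvPolynomial (Fin n) ℝ) : nnp (p * q) ≤ nnp p * nnp q := by
  classical
  conv_lhs => rw [← MvPolynomial.support_sum_monomial_coeff q, Finset.mul_sum]
  refine (nnp_sum_le _ _).trans ?_
  conv_rhs => rw [show nnp q = ∑ γ ∈ q.support, |q.coeff γ| from rfl, Finset.mul_sum]
  exact Finset.sum_le_sum fun u hu => nnp_mul_monomial_le p u _

lemma nnp_one : nnp (1 : MvPolynomial (Fin n) ℝ) = 1 := by
  classical
  have h1 : (1 : MvPolynomial (Fin n) ℝ) = monomial 0 1 := by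
    rw [← MvPolynomial.C_1, MvPolynomial.C_apply]
  rw [h1, show nnp ((monomial 0 1 : MvPolynomial (Fin n) ℝ)) = ∑ γ ∈ (monomial (0 : Fin n →₀ ℕ) (1:ℝ)).support, |(monomial (0 : Fin n →₀ ℕ) (1:ℝ)).coeff γ| from rfl, MvPolynomial.support_monomial]
  simp [MvPolynomial.coeff_monomial]

lemma nnp_pow_le (p : MvPolynomial (Fin n) ℝ) (k : ℕ) : nnp (p ^ k) ≤ nnp p ^ k := by
  induction k with
  | zero => simp [nnp_one]
  | succ k ih =>
      rw [pow_succ, pow_succ]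
      exact (nnp_mul_le _ _).trans (by gcongr; exact nnp_nonneg p)


lemma nnp_prod_le {ι : Type*} (s : Finset ι) (f : ι → MvPolynomial (Fin n) ℝ) :
    nnp (∏ i ∈ s, f i) ≤ ∏ i ∈ s, nnp (f i) := by
  classical
  induction s using Finset.induction_on with
  | empty => simp [nnp_one]
  | @insert a s ha ih =>
      rw [Finset.prod_insert ha, Finset.prod_insert ha]
      exact (nnp_mul_le _ _).trans
        (mul_le_mul_of_nonneg_left ih (nnp_nonneg _))

lemma nnp_C_le (a : ℝ) : nnp (MvPolynomial.C a : MvPolynomial (Fin n) ℝ) ≤ |a| := by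
  rw [MvPolynomial.C_apply]; exact nnp_monomial_le _ _

lemma sum_univ_eq (γ : Fin n →₀ ℕ) : (γ.sum fun _ e => e) = ∑ i, γ i :=
  Finsupp.sum_fintype _ _ fun _ => rfl

lemma nnp_aeval_le {N : ℕ} {c : ℝ} (s : Fin m → MvPolynomial (Fin n) ℝ)
    (hc : ∀ i, nnp (s i) ≤ c) (hc1 : 1 ≤ c) (p : MvPolynomial (Fin m) ℝ)
    (hd : p.totalDegree ≤ N) : nnp (MvPolynomial.aeval s p) ≤ nnp p * c ^ N := by
  conv_lhs => rw [← MvPolynomial.support_sum_monomial_coeff p, map_sum]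
  refine (nnp_sum_le _ _).trans ?_
  rw [show nnp p = ∑ γ ∈ p.support, |p.coeff γ| from rfl, Finset.sum_mul]
  refine Finset.sum_le_sum fun γ hγ => ?_
  rw [MvPolynomial.aeval_monomial]
  refine (nnp_mul_le _ _).trans ?_
  have h1 : nnp ((algebraMap ℝ (MvPolynomial (Fin n) ℝ)) (p.coeff γ)) ≤ |p.coeff γ| := by
    rw [MvPolynomial.algebraMap_eq]; exact nnp_C_le _
  have h2 : nnp (γ.prod fun i e => s i ^ e) ≤ c ^ N := by
    rw [Finsupp.prod]
    refine (nnp_prod_le _ _).trans ?_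
    calc ∏ i ∈ γ.support, nnp (s i ^ γ i)
        ≤ ∏ i ∈ γ.support, c ^ γ i := by
          refine Finset.prod_le_prod (fun _ _ => nnp_nonneg _) fun i _ =>
            (nnp_pow_le _ _).trans (pow_le_pow_left₀ (nnp_nonneg _) (hc i) _)
      _ = c ^ (γ.sum fun _ e => e) := Finset.prod_pow_eq_pow_sum _ _ _
      _ ≤ c ^ N := pow_le_pow_right₀ hc1 (le_trans (MvPolynomial.le_totalDegree hγ) hd)
  exact mul_le_mul h1 h2 (nnp_nonneg _) (abs_nonneg _)

lemma totalDegree_aeval_le {k N : ℕ} (s : Fin m → MvPolynomial (Fin n) ℝ)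
    (hs : ∀ i, (s i).totalDegree ≤ k) (p : MvPolynomial (Fin m) ℝ)
    (hd : p.totalDegree ≤ N) : (MvPolynomial.aeval s p).totalDegree ≤ N * k := by
  conv_lhs => rw [← MvPolynomial.support_sum_monomial_coeff p, map_sum]
  refine (MvPolynomial.totalDegree_finset_sum _ _).trans (Finset.sup_le fun γ hγ => ?_)
  rw [MvPolynomial.aeval_monomial]
  refine (MvPolynomial.totalDegree_mul _ _).trans ?_
  have h0 : ((algebraMap ℝ (MvPolynomial (Fin n) ℝ)) (p.coeff γ)).totalDegree = 0 := by
    rw [MvPolynomial.algebraMap_eq]; exact MvPolynomial.totalDegree_C _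
  rw [h0, zero_add, Finsupp.prod]
  refine (MvPolynomial.totalDegree_finset_prod _ _).trans ?_
  calc ∑ i ∈ γ.support, (s i ^ γ i).totalDegree
      ≤ ∑ i ∈ γ.support, γ i * k := Finset.sum_le_sum fun i _ =>
        (MvPolynomial.totalDegree_pow _ _).trans (Nat.mul_le_mul_left _ (hs i))
    _ = (γ.sum fun _ e => e) * k := by rw [Finsupp.sum, Finset.sum_mul]
    _ ≤ N * k := Nat.mul_le_mul_right _ (le_trans (MvPolynomial.le_totalDegree hγ) hd)

lemma abs_eval_le {M : ℝ} {N : ℕ} (x : Fin n → ℝ) (hx : ∀ i, |x i| ≤ M) (hM : 1 ≤ M)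
    (p : MvPolynomial (Fin n) ℝ) (hd : p.totalDegree ≤ N) :
    |MvPolynomial.eval x p| ≤ nnp p * M ^ N := by
  rw [MvPolynomial.eval_eq']
  refine (Finset.abs_sum_le_sum_abs _ _).trans ?_
  rw [show nnp p = ∑ γ ∈ p.support, |p.coeff γ| from rfl, Finset.sum_mul]
  refine Finset.sum_le_sum fun γ hγ => ?_
  rw [abs_mul]
  refine mul_le_mul_of_nonneg_left ?_ (abs_nonneg _)
  calc |∏ i, x i ^ γ i| ≤ ∏ i : Fin n, M ^ γ i := by
        rw [Finset.abs_prod]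
        exact Finset.prod_le_prod (fun _ _ => abs_nonneg _) fun i _ => by
          rw [abs_pow]; exact pow_le_pow_left₀ (abs_nonneg _) (hx i) _
    _ = M ^ (∑ i, γ i) := Finset.prod_pow_eq_pow_sum _ _ _
    _ ≤ M ^ N := pow_le_pow_right₀ hM
        (by rw [← sum_univ_eq]; exact le_trans (MvPolynomial.le_totalDegree hγ) hd)

lemma abs_pow_sub_pow_le {a b M : ℝ} (ha : |a| ≤ M) (hb : |b| ≤ M) (hM : 1 ≤ M) (k : ℕ) :
    |a ^ k - b ^ k| ≤ (k : ℝ) * M ^ k * |a - b| := by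
  induction k with
  | zero => simp
  | succ k ih =>
      have h : a ^ (k+1) - b ^ (k+1) = a * (a ^ k - b ^ k) + (a - b) * b ^ k := by ring
      have hbk : |b| ^ k ≤ M ^ k := pow_le_pow_left₀ (abs_nonneg _) hb _
      have hMk : M ^ k ≤ M ^ (k+1) := pow_le_pow_right₀ hM (Nat.le_succ _)
      have hM0 : (0:ℝ) ≤ M := le_trans zero_le_one hM
      have hMk0 : (0:ℝ) ≤ M ^ k := pow_nonneg hM0 _
      calc |a ^ (k+1) - b ^ (k+1)| ≤ |a| * |a ^ k - b ^ k| + |a - b| * |b| ^ k := by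
            rw [h]; exact (abs_add_le _ _).trans (by rw [abs_mul, abs_mul, abs_pow])
        _ ≤ M * ((k : ℝ) * M ^ k * |a - b|) + |a - b| * M ^ k :=
            add_le_add (mul_le_mul ha ih (abs_nonneg _) hM0)
              (mul_le_mul_of_nonneg_left hbk (abs_nonneg _))
        _ ≤ ((k+1 : ℕ) : ℝ) * M ^ (k+1) * |a - b| := by
            push_cast
            have e1 : M * ((k:ℝ) * M ^ k * |a - b|) = (k:ℝ) * M ^ (k+1) * |a - b| := by
              rw [pow_succ]; ring
            have e2 : |a - b| * M ^ k ≤ M ^ (k+1) * |a - b| := by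
              rw [mul_comm (M ^ (k+1))]
              exact mul_le_mul_of_nonneg_left hMk (abs_nonneg _)
            rw [e1]
            nlinarith [e2]

lemma abs_prod_sub_prod_le {M : ℝ} (hM : 1 ≤ M) (u v : Fin n → ℝ)
    (hu : ∀ i, |u i| ≤ M) (hv : ∀ i, |v i| ≤ M) (s : Finset (Fin n)) :
    |∏ i ∈ s, u i - ∏ i ∈ s, v i| ≤ M ^ s.card * ∑ i ∈ s, |u i - v i| := by
  classical
  have hM0 : (0:ℝ) ≤ M := le_trans zero_le_one hM
  induction s using Finset.induction_on with
  | empty => simp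
  | @insert a s ha ih =>
      rw [Finset.prod_insert ha, Finset.prod_insert ha, Finset.sum_insert ha,
        Finset.card_insert_of_notMem ha]
      have key : u a * ∏ i ∈ s, u i - v a * ∏ i ∈ s, v i
          = u a * (∏ i ∈ s, u i - ∏ i ∈ s, v i) + (u a - v a) * ∏ i ∈ s, v i := by ring
      have hpv : |∏ i ∈ s, v i| ≤ M ^ s.card := by
        rw [Finset.abs_prod]
        calc ∏ i ∈ s, |v i| ≤ ∏ i ∈ s, M :=
              Finset.prod_le_prod (fun _ _ => abs_nonneg _) fun i _ => hv i
          _ = M ^ s.card := Finset.prod_const _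
      have hsum0 : (0:ℝ) ≤ ∑ i ∈ s, |u i - v i| := Finset.sum_nonneg fun _ _ => abs_nonneg _
      have hMc : M ^ s.card ≤ M ^ (s.card + 1) := pow_le_pow_right₀ hM (Nat.le_succ _)
      have hMc0 : (0:ℝ) ≤ M ^ s.card := pow_nonneg hM0 _
      calc |u a * ∏ i ∈ s, u i - v a * ∏ i ∈ s, v i|
          ≤ |u a| * |∏ i ∈ s, u i - ∏ i ∈ s, v i| + |u a - v a| * |∏ i ∈ s, v i| := by
            rw [key]; exact (abs_add_le _ _).trans (by rw [abs_mul, abs_mul])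
        _ ≤ M * (M ^ s.card * ∑ i ∈ s, |u i - v i|) + |u a - v a| * M ^ s.card :=
            add_le_add (mul_le_mul (hu a) ih (abs_nonneg _) hM0)
              (mul_le_mul_of_nonneg_left hpv (abs_nonneg _))
        _ ≤ M ^ (s.card + 1) * (|u a - v a| + ∑ i ∈ s, |u i - v i|) := by
            rw [pow_succ]
            nlinarith [mul_nonneg (mul_nonneg (abs_nonneg (u a - v a)) hMc0)
              (sub_nonneg.mpr hM)]

lemma abs_eval_sub_eval_le {M : ℝ} {N : ℕ} (x y : Fin n → ℝ) (hx : ∀ i, |x i| ≤ M)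
    (hy : ∀ i, |y i| ≤ M) (hM : 1 ≤ M) (p : MvPolynomial (Fin n) ℝ)
    (hd : p.totalDegree ≤ N) :
    |MvPolynomial.eval x p - MvPolynomial.eval y p|
      ≤ nnp p * ((M ^ N) ^ n * ((N : ℝ) * M ^ N)) * ∑ i, |x i - y i| := by
  have hM0 : (0:ℝ) ≤ M := le_trans zero_le_one hM
  have hMN1 : (1:ℝ) ≤ M ^ N := one_le_pow₀ hM
  rw [MvPolynomial.eval_eq', MvPolynomial.eval_eq', ← Finset.sum_sub_distrib]
  refine (Finset.abs_sum_le_sum_abs _ _).trans ?_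
  rw [show nnp p = ∑ γ ∈ p.support, |p.coeff γ| from rfl, Finset.sum_mul, Finset.sum_mul]
  refine Finset.sum_le_sum fun γ hγ => ?_
  have hsum : (γ.sum fun _ e => e) ≤ N := le_trans (MvPolynomial.le_totalDegree hγ) hd
  have hγi : ∀ i, γ i ≤ N := fun i => by
    refine le_trans ?_ hsum
    rw [sum_univ_eq]
    exact Finset.single_le_sum (f := fun j => γ j) (fun _ _ => Nat.zero_le _)
      (Finset.mem_univ i)
  rw [← mul_sub, abs_mul, mul_assoc]
  refine mul_le_mul_of_nonneg_left ?_ (abs_nonneg _)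
  have hb : ∀ (z : Fin n → ℝ), (∀ i, |z i| ≤ M) → ∀ i, |z i ^ γ i| ≤ M ^ N := by
    intro z hz i
    rw [abs_pow]
    exact le_trans (pow_le_pow_left₀ (abs_nonneg _) (hz i) _)
      (pow_le_pow_right₀ hM (hγi i))
  calc |∏ i, x i ^ γ i - ∏ i, y i ^ γ i|
      ≤ (M ^ N) ^ (Finset.univ : Finset (Fin n)).card * ∑ i, |x i ^ γ i - y i ^ γ i| :=
        abs_prod_sub_prod_le hMN1 _ _ (hb x hx) (hb y hy) Finset.univ
    _ ≤ (M ^ N) ^ n * ∑ i, ((N:ℝ) * M ^ N * |x i - y i|) := by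
        rw [Finset.card_univ, Fintype.card_fin]
        refine mul_le_mul_of_nonneg_left (Finset.sum_le_sum fun i _ => ?_) (by positivity)
        refine le_trans (abs_pow_sub_pow_le (hx i) (hy i) hM (γ i)) ?_
        have h1 : (γ i : ℝ) * M ^ (γ i) ≤ (N : ℝ) * M ^ N :=
          mul_le_mul (Nat.cast_le.mpr (hγi i)) (pow_le_pow_right₀ hM (hγi i))
            (by positivity) (Nat.cast_nonneg _)
        exact mul_le_mul_of_nonneg_right h1 (abs_nonneg _)
    _ = (M ^ N) ^ n * ((N:ℝ) * M ^ N) * ∑ i, |x i - y i| := by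
        rw [← Finset.mul_sum]; ring

lemma nnp_le_card_mul {N : ℕ} {K : ℝ} (p : MvPolynomial (Fin n) ℝ)
    (hd : p.totalDegree ≤ N) (hK : ∀ γ, |p.coeff γ| ≤ K) :
    nnp p ≤ ((Finset.Iic (Finsupp.equivFunOnFinite.symm fun _ : Fin n => N)).card : ℝ) * K := by
  have hK0 : 0 ≤ K := le_trans (abs_nonneg _) (hK 0)
  have hsub : p.support ⊆ Finset.Iic (Finsupp.equivFunOnFinite.symm fun _ : Fin n => N) := by
    intro γ hγ
    rw [Finset.mem_Iic, Finsupp.le_def]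
    intro i
    have h1 : γ i ≤ N := by
      refine le_trans ?_ (le_trans (MvPolynomial.le_totalDegree hγ) hd)
      rw [sum_univ_eq]
      exact Finset.single_le_sum (f := fun j => γ j) (fun _ _ => Nat.zero_le _)
        (Finset.mem_univ i)
    simpa using h1
  calc nnp p ≤ ∑ _γ ∈ p.support, K := Finset.sum_le_sum fun γ _ => hK γ
    _ = (p.support.card : ℝ) * K := by rw [Finset.sum_const, nsmul_eq_mul]
    _ ≤ _ := mul_le_mul_of_nonneg_right
        (Nat.cast_le.mpr (Finset.card_le_card hsub)) hK0

/-- Truncation to total degree at most `d`. -/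
noncomputable def trunc (d : ℕ) (p : MvPolynomial (Fin n) ℝ) : MvPolynomial (Fin n) ℝ :=
  ∑ γ ∈ p.support.filter (fun γ => (γ.sum fun _ e => e) ≤ d), monomial γ (p.coeff γ)

lemma totalDegree_trunc_le (d : ℕ) (p : MvPolynomial (Fin n) ℝ) :
    (trunc d p).totalDegree ≤ d := by
  refine (MvPolynomial.totalDegree_finset_sum _ _).trans (Finset.sup_le fun γ hγ => ?_)
  exact (MvPolynomial.totalDegree_monomial_le _ _).trans (Finset.mem_filter.mp hγ).2

lemma nnp_trunc_le (d : ℕ) (p : MvPolynomial (Fin n) ℝ) : nnp (trunc d p) ≤ nnp p :=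
  (nnp_sum_le _ _).trans ((Finset.sum_le_sum fun γ _ => nnp_monomial_le _ _).trans
    (Finset.sum_le_sum_of_subset_of_nonneg (Finset.filter_subset _ _)
      fun _ _ _ => abs_nonneg _))

lemma abs_eval_sub_eval_trunc_le {d E : ℕ} {R t : ℝ} (hR : 1 ≤ R) (z : Fin n → ℝ)
    (ht0 : 0 ≤ t) (hz : ∀ i, |z i| ≤ t) (htR : t ≤ R) (p : MvPolynomial (Fin n) ℝ)
    (hd : p.totalDegree ≤ E) :
    |MvPolynomial.eval z p - MvPolynomial.eval z (trunc d p)|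
      ≤ nnp p * R ^ E * t ^ (d+1) := by
  classical
  have hR0 : (0:ℝ) ≤ R := le_trans zero_le_one hR
  have hev : MvPolynomial.eval z (trunc d p)
      = ∑ γ ∈ p.support.filter (fun γ => (γ.sum fun _ e => e) ≤ d),
          p.coeff γ * ∏ i, z i ^ γ i := by
    rw [trunc, map_sum]
    exact Finset.sum_congr rfl fun γ _ => by
      rw [MvPolynomial.eval_monomial, Finsupp.prod_pow]
  rw [MvPolynomial.eval_eq', hev,
    ← Finset.sum_filter_add_sum_filter_not p.support
      (fun γ => (γ.sum fun _ e => e) ≤ d) (fun γ => p.coeff γ * ∏ i, z i ^ γ i),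
    add_sub_cancel_left]
  refine (Finset.abs_sum_le_sum_abs _ _).trans ?_
  have hbound : ∀ γ ∈ p.support.filter (fun γ => ¬ (γ.sum fun _ e => e) ≤ d),
      |p.coeff γ * ∏ i, z i ^ γ i| ≤ |p.coeff γ| * (R ^ E * t ^ (d+1)) := by
    intro γ hγ
    rw [Finset.mem_filter, not_le] at hγ
    have hγE : (γ.sum fun _ e => e) ≤ E := le_trans (MvPolynomial.le_totalDegree hγ.1) hd
    rw [abs_mul]
    refine mul_le_mul_of_nonneg_left ?_ (abs_nonneg _)
    have h1 : |∏ i, z i ^ γ i| ≤ t ^ (γ.sum fun _ e => e) := by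
      rw [Finset.abs_prod, sum_univ_eq]
      calc ∏ i, |z i ^ γ i| ≤ ∏ i : Fin n, t ^ γ i :=
            Finset.prod_le_prod (fun _ _ => abs_nonneg _) fun i _ => by
              rw [abs_pow]; exact pow_le_pow_left₀ (abs_nonneg _) (hz i) _
        _ = t ^ (∑ i, γ i) := Finset.prod_pow_eq_pow_sum _ _ _
    refine h1.trans ?_
    have hs : (γ.sum fun _ e => e) = (d+1) + ((γ.sum fun _ e => e) - (d+1)) :=
      (Nat.add_sub_cancel' hγ.2).symm
    rw [hs, pow_add, mul_comm]
    refine mul_le_mul ?_ le_rfl (pow_nonneg ht0 _) (pow_nonneg hR0 _)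
    calc t ^ ((γ.sum fun _ e => e) - (d+1)) ≤ R ^ ((γ.sum fun _ e => e) - (d+1)) :=
          pow_le_pow_left₀ ht0 htR _
      _ ≤ R ^ E := pow_le_pow_right₀ hR (le_trans (Nat.sub_le _ _) hγE)
  calc ∑ γ ∈ p.support.filter (fun γ => ¬ (γ.sum fun _ e => e) ≤ d),
        |p.coeff γ * ∏ i, z i ^ γ i|
      ≤ ∑ γ ∈ p.support.filter (fun γ => ¬ (γ.sum fun _ e => e) ≤ d),
        |p.coeff γ| * (R ^ E * t ^ (d+1)) := Finset.sum_le_sum hbound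
    _ ≤ ∑ γ ∈ p.support, |p.coeff γ| * (R ^ E * t ^ (d+1)) :=
        Finset.sum_le_sum_of_subset_of_nonneg (Finset.filter_subset _ _)
          fun _ _ _ => mul_nonneg (abs_nonneg _)
            (mul_nonneg (pow_nonneg hR0 _) (pow_nonneg ht0 _))
    _ = nnp p * R ^ E * t ^ (d+1) := by
        rw [← Finset.sum_mul, mul_assoc]
        rfl

lemma eval_aeval' (s : Fin m → MvPolynomial (Fin n) ℝ) (x : Fin n → ℝ)
    (p : MvPolynomial (Fin m) ℝ) :
    MvPolynomial.eval x (MvPolynomial.aeval s p)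
      = MvPolynomial.eval (fun i => MvPolynomial.eval x (s i)) p := by
  induction p using MvPolynomial.induction_on with
  | C a => simp [MvPolynomial.algebraMap_eq]
  | add p q hp hq => rw [map_add, map_add, map_add, hp, hq]
  | mul_X p i hp =>
      rw [map_mul, MvPolynomial.aeval_X, map_mul, hp, map_mul, MvPolynomial.eval_X]


lemma tdeg_lin (i : Fin n) (c : ℝ) :
    (MvPolynomial.X i + MvPolynomial.C c : MvPolynomial (Fin n) ℝ).totalDegree ≤ 1 := by
  refine (MvPolynomial.totalDegree_add _ _).trans (max_le ?_ ?_)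
  · exact le_of_eq (MvPolynomial.totalDegree_X _)
  · simp

lemma nnp_lin (i : Fin n) (c : ℝ) :
    nnp (MvPolynomial.X i + MvPolynomial.C c : MvPolynomial (Fin n) ℝ) ≤ 1 + |c| := by
  refine (nnp_add_le _ _).trans (add_le_add ?_ (nnp_C_le c))
  have hX : (MvPolynomial.X i : MvPolynomial (Fin n) ℝ)
      = monomial (Finsupp.single i 1) 1 := rfl
  rw [hX]
  simpa using nnp_monomial_le (Finsupp.single i 1) (1:ℝ)

lemma totalDegree_le_of_lt {β : ℝ} {d : ℕ} (hβd : β ≤ (d:ℝ) + 1)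
    (p : MvPolynomial (Fin n) ℝ)
    (h : ∀ γ ∈ p.support, ((∑ i, γ i : ℕ) : ℝ) < β) : p.totalDegree ≤ d := by
  refine Finset.sup_le fun γ hγ => ?_
  have h1 : ((∑ i, γ i : ℕ) : ℝ) < (d:ℝ) + 1 := lt_of_lt_of_le (h γ hγ) hβd
  have h2 : (∑ i, γ i) < d + 1 := by exact_mod_cast h1
  have h3 : (γ.sum fun _ e => e) ≤ d := by rw [sum_univ_eq]; omega
  exact h3

lemma one_le_prod_factorial (γ : Fin n →₀ ℕ) :
    (1:ℝ) ≤ ((∏ i, Nat.factorial (γ i) : ℕ) : ℝ) := by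
  have : 1 ≤ ∏ i, Nat.factorial (γ i) :=
    Finset.one_le_prod' fun i _ => Nat.one_le_iff_ne_zero.mpr (Nat.factorial_ne_zero _)
  exact_mod_cast this

lemma prod_factorial_le {γ : Fin n →₀ ℕ} {d : ℕ} (h : ∀ i, γ i ≤ d) :
    (∏ i, Nat.factorial (γ i)) ≤ (Nat.factorial d) ^ n := by
  calc ∏ i, Nat.factorial (γ i) ≤ ∏ _i : Fin n, Nat.factorial d :=
        Finset.prod_le_prod' fun i _ => Nat.factorial_le (h i)
    _ = (Nat.factorial d) ^ n := by rw [Finset.prod_const, Finset.card_univ, Fintype.card_fin]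

end HolderAux

/-- The generalized Hölder class `C_r^β(D, K)`: functions admitting at every `a ∈ D` a
polynomial approximation `P_a` of degree strictly smaller than `β`, with error at most
`K |x − a|_∞^β` and coefficients bounded by `γ! |c_{γ,a}| ≤ K` uniformly over `a`. -/
noncomputable def CHolder (r : ℕ) (β : ℝ) (D : Set (Fin r → ℝ)) (K : ℝ) :
    Set ((Fin r → ℝ) → ℝ) :=
  {f | ∃ P : (Fin r → ℝ) → MvPolynomial (Fin r) ℝ,
    (∀ a ∈ D, ∀ γ ∈ (P a).support, ((∑ i, γ i : ℕ) : ℝ) < β) ∧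
    (∀ a ∈ D, ∀ x ∈ D, |f x - MvPolynomial.eval x (P a)| ≤ K * ‖x - a‖ ^ β) ∧
    (∀ a ∈ D, ∀ γ : Fin r →₀ ℕ,
      ((∏ i, Nat.factorial (γ i) : ℕ) : ℝ) * |MvPolynomial.coeff γ (P a)| ≤ K)}

/-- `C_r^β(D) = ⋃_{K > 0} C_r^β(D, K)`. -/
noncomputable def CHolderU (r : ℕ) (β : ℝ) (D : Set (Fin r → ℝ)) :
    Set ((Fin r → ℝ) → ℝ) := ⋃ K ∈ Set.Ioi (0 : ℝ), CHolder r β D K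

open HolderAux MvPolynomial in
/-- Composition of generalized Hölder functions: if `D ⊂ ℝ^r` is bounded, `β ≥ 1`,
`f : D → ℝ^q` has all components in `C_r^β(D)` and `g ∈ C_q^β(ℝ^q)`, then
`g ∘ f ∈ C_r^β(D)`. -/
theorem holder_composition (r q : ℕ) (β : ℝ) (hβ : 1 ≤ β)
    (D : Set (Fin r → ℝ)) (hD : Bornology.IsBounded D)
    (f : (Fin r → ℝ) → Fin q → ℝ) (hf : ∀ i, (fun x => f x i) ∈ CHolderU r β D)
    (g : (Fin q → ℝ) → ℝ) (hg : g ∈ CHolderU q β Set.univ) :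
    (fun x => g (f x)) ∈ CHolderU r β D := by
  classical
  simp only [CHolderU, CHolder, Set.mem_iUnion, Set.mem_setOf_eq, Set.mem_Ioi,
    exists_prop] at hf hg ⊢
  choose Kf hKf0 Pf hfdeg hferr hfcoef using hf
  obtain ⟨Kg, hKg0, Qg, hgdeg, hgerr, hgcoef⟩ := hg
  -- numeric basics
  have hβ0 : (0:ℝ) < β := lt_of_lt_of_le one_pos hβ
  have hβne : β ≠ 0 := ne_of_gt hβ0
  set d : ℕ := ⌈β⌉₊ - 1 with hd_def
  have hceil1 : 1 ≤ ⌈β⌉₊ := Nat.one_le_ceil_iff.mpr hβ0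
  have hd1 : (d:ℝ) + 1 = (⌈β⌉₊ : ℝ) := by
    rw [hd_def, Nat.cast_sub hceil1]; ring
  have hβd1 : β ≤ (d:ℝ) + 1 := by rw [hd1]; exact Nat.le_ceil β
  have hdβ : (d:ℝ) < β := by
    have h := Nat.ceil_lt_add_one (le_of_lt hβ0)
    linarith
  -- bound on D
  obtain ⟨M₀, hM₀⟩ := hD.exists_norm_le
  set M : ℝ := max M₀ 1 with hM_def
  have hM1 : (1:ℝ) ≤ M := le_max_right _ _
  have hM0 : (0:ℝ) ≤ M := le_trans zero_le_one hM1
  have h2M1 : (1:ℝ) ≤ 2*M := by linarith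
  have h2M0 : (0:ℝ) ≤ 2*M := by linarith
  have hMD : ∀ x ∈ D, ∀ i, |x i| ≤ M := by
    intro x hx i
    have h1 : ‖x i‖ ≤ ‖x‖ := norm_le_pi_norm x i
    have h2 : ‖x‖ ≤ M := (hM₀ x hx).trans (le_max_left _ _)
    rw [Real.norm_eq_abs] at h1
    linarith
  have hsub2M : ∀ x ∈ D, ∀ a ∈ D, ‖x - a‖ ≤ 2 * M := by
    intro x hx a ha
    have h0 := norm_sub_le x a
    have h1 : ‖x‖ ≤ M := (hM₀ x hx).trans (le_max_left _ _)
    have h2 : ‖a‖ ≤ M := (hM₀ a ha).trans (le_max_left _ _)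
    linarith
  have hsubc : ∀ (x a : Fin r → ℝ) (i : Fin r), |x i - a i| ≤ ‖x - a‖ := by
    intro x a i
    have h1 : ‖(x - a) i‖ ≤ ‖x - a‖ := norm_le_pi_norm (x - a) i
    simpa [Real.norm_eq_abs] using h1
  -- constants for f
  set Kf' : ℝ := 1 + ∑ i, Kf i with hKf'_def
  have hKfsum0 : 0 ≤ ∑ i, Kf i := Finset.sum_nonneg fun i _ => (hKf0 i).le
  have hKf'1 : (1:ℝ) ≤ Kf' := by rw [hKf'_def]; linarith
  have hKf'0 : (0:ℝ) ≤ Kf' := le_trans zero_le_one hKf'1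
  have hKfle : ∀ i, Kf i ≤ Kf' := by
    intro i
    have h1 : Kf i ≤ ∑ j, Kf j :=
      Finset.single_le_sum (fun j _ => (hKf0 j).le) (Finset.mem_univ i)
    rw [hKf'_def]; linarith
  have hfdeg' : ∀ i, ∀ a ∈ D, (Pf i a).totalDegree ≤ d := fun i a ha =>
    totalDegree_le_of_lt hβd1 _ (hfdeg i a ha)
  have hfcoef' : ∀ i, ∀ a ∈ D, ∀ γ, |MvPolynomial.coeff γ (Pf i a)| ≤ Kf' := by
    intro i a ha γ
    refine le_trans (le_trans ?_ (hfcoef i a ha γ)) (hKfle i)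
    exact le_mul_of_one_le_left (abs_nonneg _) (one_le_prod_factorial γ)
  set nnf : ℝ :=
    ((Finset.Iic (Finsupp.equivFunOnFinite.symm fun _ : Fin r => d)).card : ℝ) * Kf'
    with hnnf_def
  have hnnf : ∀ i, ∀ a ∈ D, nnp (Pf i a) ≤ nnf := fun i a ha =>
    nnp_le_card_mul _ (hfdeg' i a ha) (hfcoef' i a ha)
  set nnf1 : ℝ := max nnf 1 with hnnf1_def
  have hnnf1 : (1:ℝ) ≤ nnf1 := le_max_right _ _
  have hnnf10 : (0:ℝ) ≤ nnf1 := le_trans zero_le_one hnnf1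
  have hnnf1' : ∀ i, ∀ a ∈ D, nnp (Pf i a) ≤ nnf1 := fun i a ha =>
    (hnnf i a ha).trans (le_max_left _ _)
  -- constants for g
  have hgdeg' : ∀ b, (Qg b).totalDegree ≤ d := fun b =>
    totalDegree_le_of_lt hβd1 _ (hgdeg b (Set.mem_univ b))
  have hgcoef' : ∀ b γ, |MvPolynomial.coeff γ (Qg b)| ≤ Kg := by
    intro b γ
    refine le_trans ?_ (hgcoef b (Set.mem_univ b) γ)
    exact le_mul_of_one_le_left (abs_nonneg _) (one_le_prod_factorial γ)
  set nng : ℝ :=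
    ((Finset.Iic (Finsupp.equivFunOnFinite.symm fun _ : Fin q => d)).card : ℝ) * Kg
    with hnng_def
  have hnng0 : 0 ≤ nng := mul_nonneg (Nat.cast_nonneg _) hKg0.le
  have hnng : ∀ b, nnp (Qg b) ≤ nng := fun b =>
    nnp_le_card_mul _ (hgdeg' b) (hgcoef' b)
  -- f agrees with its polynomial at the center
  have hfeq : ∀ x ∈ D, ∀ i, f x i = MvPolynomial.eval x (Pf i x) := by
    intro x hx i
    have h := hferr i x hx x hx
    rw [sub_self, norm_zero, Real.zero_rpow hβne, mul_zero] at h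
    exact sub_eq_zero.mp (abs_eq_zero.mp (le_antisymm h (abs_nonneg _)))
  -- bound on f and on values of Pf on D
  set B : ℝ := nnf1 * M ^ d with hB_def
  have hPfB : ∀ a ∈ D, ∀ x ∈ D, ∀ i, |MvPolynomial.eval x (Pf i a)| ≤ B := by
    intro a ha x hx i
    refine le_trans (abs_eval_le x (hMD x hx) hM1 _ (hfdeg' i a ha)) ?_
    exact mul_le_mul_of_nonneg_right (hnnf1' i a ha) (pow_nonneg hM0 _)
  have hfB : ∀ x ∈ D, ∀ i, |f x i| ≤ B := by
    intro x hx i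
    rw [hfeq x hx i]
    exact hPfB x hx x hx i
  set B1 : ℝ := max B 1 with hB1_def
  have hB1 : (1:ℝ) ≤ B1 := le_max_right _ _
  have hB10 : (0:ℝ) ≤ B1 := le_trans zero_le_one hB1
  -- Lipschitz bound for f
  set Cl : ℝ := (M ^ d) ^ r * ((d:ℝ) * M ^ d) with hCl_def
  have hCl0 : 0 ≤ Cl := mul_nonneg (pow_nonneg (pow_nonneg hM0 _) _)
    (mul_nonneg (Nat.cast_nonneg _) (pow_nonneg hM0 _))
  set L : ℝ := Kf' * (2*M) ^ (β - 1) + nnf1 * Cl * r with hL_def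
  have hL0 : 0 ≤ L := add_nonneg (mul_nonneg hKf'0 (Real.rpow_nonneg h2M0 _))
    (mul_nonneg (mul_nonneg hnnf10 hCl0) (Nat.cast_nonneg _))
  have hrpow_lin : ∀ t : ℝ, 0 ≤ t → t ≤ 2*M → t ^ β ≤ (2*M) ^ (β-1) * t := by
    intro t ht0 ht
    have h1 : t ^ β = t ^ (β - 1) * t := by
      nth_rewrite 1 [show β = (β - 1) + 1 by ring]
      rw [Real.rpow_add' ht0 (by rw [show β - 1 + 1 = β by ring]; exact hβne),
        Real.rpow_one]
    rw [h1]
    exact mul_le_mul_of_nonneg_right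
      (Real.rpow_le_rpow ht0 ht (by linarith)) ht0
  have hflip : ∀ x ∈ D, ∀ a ∈ D, ‖f x - f a‖ ≤ L * ‖x - a‖ := by
    intro x hx a ha
    rw [pi_norm_le_iff_of_nonneg (mul_nonneg hL0 (norm_nonneg _))]
    intro i
    rw [Pi.sub_apply, Real.norm_eq_abs]
    have h1 : |f x i - MvPolynomial.eval x (Pf i a)| ≤ Kf i * ‖x - a‖ ^ β :=
      hferr i a ha x hx
    have h2 : |MvPolynomial.eval x (Pf i a) - MvPolynomial.eval a (Pf i a)|
        ≤ nnp (Pf i a) * Cl * ∑ j, |x j - a j| :=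
      abs_eval_sub_eval_le x a (hMD x hx) (hMD a ha) hM1 _ (hfdeg' i a ha)
    have h3 : ∑ j, |x j - a j| ≤ (r:ℝ) * ‖x - a‖ := by
      calc ∑ j, |x j - a j| ≤ ∑ _j : Fin r, ‖x - a‖ :=
            Finset.sum_le_sum fun j _ => hsubc x a j
        _ = (r:ℝ) * ‖x - a‖ := by
            rw [Finset.sum_const, Finset.card_univ, Fintype.card_fin, nsmul_eq_mul]
    calc |f x i - f a i|
        ≤ |f x i - MvPolynomial.eval x (Pf i a)|
          + |MvPolynomial.eval x (Pf i a) - f a i| := abs_sub_le _ _ _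
      _ ≤ Kf i * ‖x - a‖ ^ β + nnp (Pf i a) * Cl * ((r:ℝ) * ‖x - a‖) := by
          rw [hfeq a ha i]
          exact add_le_add h1 (le_trans h2
            (mul_le_mul_of_nonneg_left h3 (mul_nonneg (nnp_nonneg _) hCl0)))
      _ ≤ Kf' * ((2*M) ^ (β-1) * ‖x - a‖) + nnf1 * Cl * ((r:ℝ) * ‖x - a‖) := by
          refine add_le_add ?_ ?_
          · exact mul_le_mul (hKfle i)
              (hrpow_lin _ (norm_nonneg _) (hsub2M x hx a ha))
              (Real.rpow_nonneg (norm_nonneg _) _) hKf'0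
          · refine mul_le_mul_of_nonneg_right ?_
              (mul_nonneg (Nat.cast_nonneg _) (norm_nonneg _))
            exact mul_le_mul_of_nonneg_right (hnnf1' i a ha) hCl0
      _ = L * ‖x - a‖ := by rw [hL_def]; ring
  -- the composite polynomial
  set comp : (Fin r → ℝ) → MvPolynomial (Fin r) ℝ :=
    fun a => MvPolynomial.aeval (fun i => Pf i a) (Qg (f a)) with hcomp_def
  set Spoly : (Fin r → ℝ) → MvPolynomial (Fin r) ℝ :=
    fun a => MvPolynomial.aeval
      (fun i => MvPolynomial.X i + MvPolynomial.C (a i)) (comp a) with hS_def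
  set P : (Fin r → ℝ) → MvPolynomial (Fin r) ℝ :=
    fun a => MvPolynomial.aeval
      (fun i => MvPolynomial.X i + MvPolynomial.C (-(a i))) (trunc d (Spoly a))
    with hP_def
  have hcompdeg : ∀ a ∈ D, (comp a).totalDegree ≤ d * d := by
    intro a ha
    simp only [hcomp_def]
    exact totalDegree_aeval_le _ (fun i => hfdeg' i a ha) _ (hgdeg' (f a))
  have hSdeg : ∀ a ∈ D, (Spoly a).totalDegree ≤ d * d := by
    intro a ha
    simp only [hS_def]
    have h1 := totalDegree_aeval_le
      (fun i => MvPolynomial.X i + MvPolynomial.C (a i))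
      (fun i => tdeg_lin i (a i)) _ (hcompdeg a ha)
    simpa using h1
  have hPdeg : ∀ a ∈ D, (P a).totalDegree ≤ d := by
    intro a ha
    simp only [hP_def]
    have h1 := totalDegree_aeval_le
      (fun i => MvPolynomial.X i + MvPolynomial.C (-(a i)))
      (fun i => tdeg_lin i (-(a i))) _ (totalDegree_trunc_le d (Spoly a))
    simpa using h1
  have hnncomp : ∀ a ∈ D, nnp (comp a) ≤ nng * nnf1 ^ d := by
    intro a ha
    simp only [hcomp_def]
    refine le_trans (nnp_aeval_le _ (fun i => hnnf1' i a ha) hnnf1 _ (hgdeg' (f a))) ?_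
    exact mul_le_mul_of_nonneg_right (hnng (f a)) (pow_nonneg hnnf10 _)
  have h1M1 : (1:ℝ) ≤ 1 + M := by linarith
  have h1M0 : (0:ℝ) ≤ 1 + M := by linarith
  set C2 : ℝ := nng * nnf1 ^ d * (1 + M) ^ (d * d) with hC2_def
  have hC2_0 : 0 ≤ C2 := mul_nonneg (mul_nonneg hnng0 (pow_nonneg hnnf10 _))
    (pow_nonneg h1M0 _)
  have hnnS : ∀ a ∈ D, nnp (Spoly a) ≤ C2 := by
    intro a ha
    simp only [hS_def]
    refine le_trans (nnp_aeval_le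
      (fun i => MvPolynomial.X i + MvPolynomial.C (a i))
      (fun i => (nnp_lin i (a i)).trans (by have := hMD a ha i; linarith))
      h1M1 _ (hcompdeg a ha)) ?_
    exact mul_le_mul_of_nonneg_right (hnncomp a ha) (pow_nonneg h1M0 _)
  set C3 : ℝ := C2 * (1 + M) ^ d with hC3_def
  have hC3_0 : 0 ≤ C3 := mul_nonneg hC2_0 (pow_nonneg h1M0 _)
  have hnnP : ∀ a ∈ D, nnp (P a) ≤ C3 := by
    intro a ha
    simp only [hP_def]
    refine le_trans (nnp_aeval_le
      (fun i => MvPolynomial.X i + MvPolynomial.C (-(a i)))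
      (fun i => (nnp_lin i (-(a i))).trans
        (by have := hMD a ha i; rw [abs_neg]; linarith))
      h1M1 _ (totalDegree_trunc_le d (Spoly a))) ?_
    exact mul_le_mul_of_nonneg_right ((nnp_trunc_le d _).trans (hnnS a ha))
      (pow_nonneg h1M0 _)
  -- evaluation identities
  have hevallin : ∀ (c z : Fin r → ℝ) (p : MvPolynomial (Fin r) ℝ),
      MvPolynomial.eval z (MvPolynomial.aeval
        (fun i => MvPolynomial.X i + MvPolynomial.C (c i)) p)
        = MvPolynomial.eval (fun i => z i + c i) p := by
    intro c z p
    have hx : (fun i => MvPolynomial.eval z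
        (MvPolynomial.X i + MvPolynomial.C (c i))) = fun i => z i + c i := by
      funext i; simp
    rw [eval_aeval', hx]
  have hPeval : ∀ (a x : Fin r → ℝ), MvPolynomial.eval x (P a)
      = MvPolynomial.eval (fun i => x i - a i) (trunc d (Spoly a)) := by
    intro a x
    simp only [hP_def]
    have h1 := hevallin (fun i => -(a i)) x (trunc d (Spoly a))
    simpa [sub_eq_add_neg] using h1
  have hSeval : ∀ (a x : Fin r → ℝ),
      MvPolynomial.eval (fun i => x i - a i) (Spoly a)
        = MvPolynomial.eval x (comp a) := by
    intro a x
    simp only [hS_def]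
    rw [hevallin]
    have hx : (fun i => x i - a i + a i) = x := by funext i; ring
    rw [hx]
  have hcompeval : ∀ (a x : Fin r → ℝ), MvPolynomial.eval x (comp a)
      = MvPolynomial.eval (fun i => MvPolynomial.eval x (Pf i a)) (Qg (f a)) := by
    intro a x
    simp only [hcomp_def]
    rw [eval_aeval']
  -- error constant
  set CC : ℝ := (B1 ^ d) ^ q * ((d:ℝ) * B1 ^ d) with hCC_def
  have hCC0 : 0 ≤ CC := mul_nonneg (pow_nonneg (pow_nonneg hB10 _) _)
    (mul_nonneg (Nat.cast_nonneg _) (pow_nonneg hB10 _))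
  set KE : ℝ := Kg * L ^ β + nng * CC * ((q:ℝ) * Kf')
      + C2 * (2*M) ^ (d*d) * (2*M) ^ ((d:ℝ) + 1 - β) with hKE_def
  have hKE0 : 0 ≤ KE := by
    rw [hKE_def]
    refine add_nonneg (add_nonneg ?_ ?_) ?_
    · exact mul_nonneg hKg0.le (Real.rpow_nonneg hL0 _)
    · exact mul_nonneg (mul_nonneg hnng0 hCC0)
        (mul_nonneg (Nat.cast_nonneg _) hKf'0)
    · exact mul_nonneg (mul_nonneg hC2_0 (pow_nonneg h2M0 _))
        (Real.rpow_nonneg h2M0 _)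
  -- the main error estimate
  have herr : ∀ a ∈ D, ∀ x ∈ D,
      |g (f x) - MvPolynomial.eval x (P a)| ≤ KE * ‖x - a‖ ^ β := by
    intro a ha x hx
    have ht0 : (0:ℝ) ≤ ‖x - a‖ := norm_nonneg _
    have ht2M : ‖x - a‖ ≤ 2*M := hsub2M x hx a ha
    have htβ0 : 0 ≤ ‖x - a‖ ^ β := Real.rpow_nonneg ht0 _
    have hT1 : |g (f x) - MvPolynomial.eval (f x) (Qg (f a))|
        ≤ Kg * L ^ β * ‖x - a‖ ^ β := by
      have h1 := hgerr (f a) (Set.mem_univ _) (f x) (Set.mem_univ _)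
      have h2 : ‖f x - f a‖ ^ β ≤ (L * ‖x - a‖) ^ β :=
        Real.rpow_le_rpow (norm_nonneg _) (hflip x hx a ha) (le_of_lt hβ0)
      have h3 : (L * ‖x - a‖) ^ β = L ^ β * ‖x - a‖ ^ β := Real.mul_rpow hL0 ht0
      calc |g (f x) - MvPolynomial.eval (f x) (Qg (f a))|
          ≤ Kg * ‖f x - f a‖ ^ β := h1
        _ ≤ Kg * (L ^ β * ‖x - a‖ ^ β) := by
            rw [← h3]; exact mul_le_mul_of_nonneg_left h2 hKg0.le
        _ = Kg * L ^ β * ‖x - a‖ ^ β := by ring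
    have hwB1 : ∀ i, |MvPolynomial.eval x (Pf i a)| ≤ B1 := fun i =>
      (hPfB a ha x hx i).trans (le_max_left _ _)
    have hfxB1 : ∀ i, |f x i| ≤ B1 := fun i => (hfB x hx i).trans (le_max_left _ _)
    have hT2 : |MvPolynomial.eval (f x) (Qg (f a))
        - MvPolynomial.eval (fun i => MvPolynomial.eval x (Pf i a)) (Qg (f a))|
        ≤ nng * CC * ((q:ℝ) * Kf') * ‖x - a‖ ^ β := by
      have h1 := abs_eval_sub_eval_le (f x) (fun i => MvPolynomial.eval x (Pf i a))
        hfxB1 hwB1 hB1 _ (hgdeg' (f a))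
      have h2 : ∑ i, |f x i - MvPolynomial.eval x (Pf i a)|
          ≤ (q:ℝ) * (Kf' * ‖x - a‖ ^ β) := by
        calc ∑ i, |f x i - MvPolynomial.eval x (Pf i a)|
            ≤ ∑ _i : Fin q, Kf' * ‖x - a‖ ^ β :=
              Finset.sum_le_sum fun i _ => le_trans (hferr i a ha x hx)
                (mul_le_mul_of_nonneg_right (hKfle i) htβ0)
          _ = (q:ℝ) * (Kf' * ‖x - a‖ ^ β) := by
              rw [Finset.sum_const, Finset.card_univ, Fintype.card_fin, nsmul_eq_mul]
      calc |MvPolynomial.eval (f x) (Qg (f a))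
          - MvPolynomial.eval (fun i => MvPolynomial.eval x (Pf i a)) (Qg (f a))|
          ≤ nnp (Qg (f a)) * CC * ∑ i, |f x i - MvPolynomial.eval x (Pf i a)| := h1
        _ ≤ nng * CC * ((q:ℝ) * (Kf' * ‖x - a‖ ^ β)) := by
            refine mul_le_mul (mul_le_mul_of_nonneg_right (hnng _) hCC0) h2
              (Finset.sum_nonneg fun _ _ => abs_nonneg _) (mul_nonneg hnng0 hCC0)
        _ = nng * CC * ((q:ℝ) * Kf') * ‖x - a‖ ^ β := by ring
    have hzt : ∀ i, |x i - a i| ≤ ‖x - a‖ := fun i => hsubc x a i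
    have hT3' : |MvPolynomial.eval x (comp a) - MvPolynomial.eval x (P a)|
        ≤ C2 * (2*M) ^ (d*d) * ‖x - a‖ ^ (d+1) := by
      rw [hPeval a x, ← hSeval a x]
      refine le_trans (abs_eval_sub_eval_trunc_le h2M1 _ ht0 hzt ht2M _ (hSdeg a ha)) ?_
      exact mul_le_mul_of_nonneg_right
        (mul_le_mul_of_nonneg_right (hnnS a ha) (pow_nonneg h2M0 _))
        (pow_nonneg ht0 _)
    have hpow : ‖x - a‖ ^ (d+1) ≤ (2*M) ^ ((d:ℝ)+1-β) * ‖x - a‖ ^ β := by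
      have h1 : ‖x - a‖ ^ (d+1) = ‖x - a‖ ^ (((d+1:ℕ):ℝ)) :=
        (Real.rpow_natCast _ (d+1)).symm
      have h2 : ((d+1:ℕ):ℝ) = β + (((d:ℝ)+1) - β) := by push_cast; ring
      rw [h1, h2, Real.rpow_add' ht0
        (by rw [show β + ((d:ℝ)+1-β) = (d:ℝ)+1 by ring]; positivity)]
      rw [mul_comm]
      exact mul_le_mul_of_nonneg_right
        (Real.rpow_le_rpow ht0 ht2M (by linarith)) htβ0
    have hT3 : |MvPolynomial.eval x (comp a) - MvPolynomial.eval x (P a)|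
        ≤ C2 * (2*M) ^ (d*d) * (2*M) ^ ((d:ℝ)+1-β) * ‖x - a‖ ^ β := by
      refine hT3'.trans ?_
      have hc0 : 0 ≤ C2 * (2*M)^(d*d) := mul_nonneg hC2_0 (pow_nonneg h2M0 _)
      calc C2 * (2*M)^(d*d) * ‖x - a‖^(d+1)
          ≤ C2 * (2*M)^(d*d) * ((2*M)^((d:ℝ)+1-β) * ‖x - a‖^β) :=
            mul_le_mul_of_nonneg_left hpow hc0
        _ = C2 * (2*M) ^ (d*d) * (2*M) ^ ((d:ℝ)+1-β) * ‖x - a‖ ^ β := by ring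
    have hdecomp : g (f x) - MvPolynomial.eval x (P a)
        = (g (f x) - MvPolynomial.eval (f x) (Qg (f a)))
          + (MvPolynomial.eval (f x) (Qg (f a))
            - MvPolynomial.eval (fun i => MvPolynomial.eval x (Pf i a)) (Qg (f a)))
          + (MvPolynomial.eval x (comp a) - MvPolynomial.eval x (P a)) := by
      rw [hcompeval a x]
      ring
    rw [hdecomp]
    calc |_ + _ + _| ≤ |g (f x) - MvPolynomial.eval (f x) (Qg (f a))|
          + |MvPolynomial.eval (f x) (Qg (f a))
            - MvPolynomial.eval (fun i => MvPolynomial.eval x (Pf i a)) (Qg (f a))|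
          + |MvPolynomial.eval x (comp a) - MvPolynomial.eval x (P a)| :=
        abs_add_three _ _ _
      _ ≤ Kg * L ^ β * ‖x - a‖ ^ β + nng * CC * ((q:ℝ) * Kf') * ‖x - a‖ ^ β
          + C2 * (2*M) ^ (d*d) * (2*M) ^ ((d:ℝ)+1-β) * ‖x - a‖ ^ β :=
        add_le_add (add_le_add hT1 hT2) hT3
      _ = KE * ‖x - a‖ ^ β := by rw [hKE_def]; ring
  -- coefficient constant
  set KC : ℝ := ((Nat.factorial d ^ r : ℕ) : ℝ) * C3 with hKC_def
  have hKC0 : 0 ≤ KC := mul_nonneg (Nat.cast_nonneg _) hC3_0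
  refine ⟨KE + KC + 1, by linarith, P, ?_, ?_, ?_⟩
  · intro a ha γ hγ
    have h1 : (γ.sum fun _ e => e) ≤ d :=
      le_trans (MvPolynomial.le_totalDegree hγ) (hPdeg a ha)
    rw [sum_univ_eq] at h1
    calc ((∑ i, γ i : ℕ):ℝ) ≤ (d:ℝ) := by exact_mod_cast h1
      _ < β := hdβ
  · intro a ha x hx
    refine le_trans (herr a ha x hx) ?_
    have h0 : 0 ≤ ‖x - a‖ ^ β := Real.rpow_nonneg (norm_nonneg _) _
    have h1 : KE ≤ KE + KC + 1 := by linarith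
    exact mul_le_mul_of_nonneg_right h1 h0
  · intro a ha γ
    by_cases hγ : γ ∈ (P a).support
    · have h1 : ∀ i, γ i ≤ d := by
        intro i
        have hs : (γ.sum fun _ e => e) ≤ d :=
          le_trans (MvPolynomial.le_totalDegree hγ) (hPdeg a ha)
        refine le_trans ?_ hs
        rw [sum_univ_eq]
        exact Finset.single_le_sum (f := fun j => γ j) (fun _ _ => Nat.zero_le _)
          (Finset.mem_univ i)
      have h2 : ((∏ i, Nat.factorial (γ i) : ℕ):ℝ)
          ≤ ((Nat.factorial d ^ r : ℕ):ℝ) := by exact_mod_cast prod_factorial_le h1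
      have h3 : |MvPolynomial.coeff γ (P a)| ≤ C3 :=
        (abs_coeff_le_nnp _ _).trans (hnnP a ha)
      calc ((∏ i, Nat.factorial (γ i) : ℕ):ℝ) * |MvPolynomial.coeff γ (P a)|
          ≤ ((Nat.factorial d ^ r : ℕ):ℝ) * C3 :=
            mul_le_mul h2 h3 (abs_nonneg _) (Nat.cast_nonneg _)
        _ ≤ KE + KC + 1 := by rw [hKC_def] at *; linarith
    · rw [MvPolynomial.notMem_support_iff.mp hγ, abs_zero, mul_zero]
      linarith
end

section
/- Composition of ReLU networks: if f ∈ ℱ(L, p) with p = (p_0,…,p_{L+1}), g ∈ ℱ(L', p') with p' = (p'_0,…,p'_{L'+1}), p_{L+1} = p'_0, and v ∈ [−1,1]^{p_{L+1}}, then g ∘ σ_v(f) ∈ ℱ(L + L' + 1, (p_0, …, p_{L+1}, p'_1, …, p'_{L'+1})). -/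
open Finset

/-- Evaluation of a ReLU feedforward network with `L` hidden layers, width function `p`,
weight matrices `W` and shift vectors `v`:
`x ↦ W_L σ_{v_L} W_{L-1} ⋯ W_1 σ_{v_1} W_0 x`. -/
noncomputable def netEval (p : ℕ → ℕ)
    (W : ∀ l : ℕ, Matrix (Fin (p (l + 1))) (Fin (p l)) ℝ)
    (v : ∀ l : ℕ, Fin (p l) → ℝ) : (L : ℕ) → (Fin (p 0) → ℝ) → Fin (p (L + 1)) → ℝ
  | 0, x => (W 0).mulVec x
  | (L + 1), x => (W (L + 1)).mulVec fun i => max (netEval p W v L x i - v (L + 1) i) 0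

open Classical in
/-- Number of non-zero entries of a matrix. -/
noncomputable def matSupp {m n : ℕ} (A : Matrix (Fin m) (Fin n) ℝ) : ℕ :=
  (Finset.univ.filter fun ij : Fin m × Fin n => A ij.1 ij.2 ≠ 0).card

open Classical in
/-- Number of non-zero entries of a vector. -/
noncomputable def vecSupp {n : ℕ} (u : Fin n → ℝ) : ℕ :=
  (Finset.univ.filter fun i : Fin n => u i ≠ 0).card

/-- All weight-matrix and shift-vector entries bounded in absolute value by one. -/
def NetParamsOK (L : ℕ) (p : ℕ → ℕ)
    (W : ∀ l : ℕ, Matrix (Fin (p (l + 1))) (Fin (p l)) ℝ)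
    (v : ∀ l : ℕ, Fin (p l) → ℝ) : Prop :=
  (∀ l ≤ L, ∀ i j, |W l i j| ≤ 1) ∧ (∀ l, 1 ≤ l → l ≤ L → ∀ i, |v l i| ≤ 1)

/-- Total number of non-zero network parameters `∑_j ‖W_j‖_0 + |v_j|_0`. -/
noncomputable def netSparsity (L : ℕ) (p : ℕ → ℕ)
    (W : ∀ l : ℕ, Matrix (Fin (p (l + 1))) (Fin (p l)) ℝ)
    (v : ∀ l : ℕ, Fin (p l) → ℝ) : ℕ :=
  (∑ l ∈ Finset.range (L + 1), matSupp (W l)) + ∑ l ∈ Finset.Icc 1 L, vecSupp (v l)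

/-- The class `ℱ(L, p)` of fully connected ReLU networks with `L` hidden layers, width
function `p` (with `p 0 = d` inputs and `p (L+1) = k` outputs) and all parameters bounded
in absolute value by one, viewed as functions `ℝ^d → ℝ^k`. -/
noncomputable def NetClassF (L d k : ℕ) (p : ℕ → ℕ) : Set ((Fin d → ℝ) → Fin k → ℝ) :=
  {f | ∃ (h0 : p 0 = d) (h1 : p (L + 1) = k)
      (W : ∀ l : ℕ, Matrix (Fin (p (l + 1))) (Fin (p l)) ℝ)
      (v : ∀ l : ℕ, Fin (p l) → ℝ),
    NetParamsOK L p W v ∧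
    ∀ x : Fin d → ℝ,
      f x = fun j => netEval p W v L (fun i => x (Fin.cast h0 i)) (Fin.cast h1.symm j)}

/-- The class `ℱ(L, p, s)` of `s`-sparse ReLU networks with parameters bounded by one. -/
noncomputable def NetClass (L d k : ℕ) (p : ℕ → ℕ) (s : ℕ) : Set ((Fin d → ℝ) → Fin k → ℝ) :=
  {f | ∃ (h0 : p 0 = d) (h1 : p (L + 1) = k)
      (W : ∀ l : ℕ, Matrix (Fin (p (l + 1))) (Fin (p l)) ℝ)
      (v : ∀ l : ℕ, Fin (p l) → ℝ),
    NetParamsOK L p W v ∧ netSparsity L p W v ≤ s ∧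
    ∀ x : Fin d → ℝ,
      f x = fun j => netEval p W v L (fun i => x (Fin.cast h0 i)) (Fin.cast h1.symm j)}

lemma mulVec_submatrix_cast {m n m' n' : ℕ} (hm : m' = m) (hn : n' = n)
    (A : Matrix (Fin m) (Fin n) ℝ) (x : Fin n' → ℝ) (j : Fin m') :
    (A.submatrix (Fin.cast hm) (Fin.cast hn)).mulVec x j
      = A.mulVec (fun i => x (Fin.cast hn.symm i)) (Fin.cast hm j) := by
  subst hm; subst hn; rfl

def qfun (L : ℕ) (p p' : ℕ → ℕ) : ℕ → ℕ := fun l => if l ≤ L + 1 then p l else p' (l - (L + 1))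

lemma qfun_le {L l : ℕ} (p p' : ℕ → ℕ) (h : l ≤ L + 1) : qfun L p p' l = p l := if_pos h

lemma qfun_gt {L l : ℕ} (p p' : ℕ → ℕ) (h : L + 1 < l) : qfun L p p' l = p' (l - (L + 1)) :=
  if_neg (by omega)

lemma qfun_hi {L l : ℕ} {p p' : ℕ → ℕ} (hk : p (L + 1) = p' 0) (h : L + 1 ≤ l) :
    qfun L p p' l = p' (l - (L + 1)) := by
  rcases Nat.lt_or_ge (L + 1) l with h' | h'
  · exact qfun_gt p p' h'
  · have hl : l = L + 1 := by omega
    subst hl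
    rw [qfun_le p p' le_rfl, hk, Nat.sub_self]

lemma qfun_hi' {L l : ℕ} {p p' : ℕ → ℕ} (hk : p (L + 1) = p' 0) (h : L + 1 ≤ l) :
    qfun L p p' (l + 1) = p' (l - (L + 1) + 1) := by
  rw [qfun_gt p p' (by omega)]
  congr 1
  omega

noncomputable def Wn (L : ℕ) (p p' : ℕ → ℕ) (hk : p (L + 1) = p' 0)
    (W : ∀ l, Matrix (Fin (p (l + 1))) (Fin (p l)) ℝ)
    (W' : ∀ l, Matrix (Fin (p' (l + 1))) (Fin (p' l)) ℝ) :
    ∀ l, Matrix (Fin (qfun L p p' (l + 1))) (Fin (qfun L p p' l)) ℝ := fun l =>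
  if h : l ≤ L then
    (W l).submatrix (Fin.cast (qfun_le p p' (by omega))) (Fin.cast (qfun_le p p' (by omega)))
  else
    (W' (l - (L + 1))).submatrix (Fin.cast (qfun_hi' hk (by omega)))
      (Fin.cast (qfun_hi hk (by omega)))

noncomputable def vn (L : ℕ) (p p' : ℕ → ℕ) (hk : p (L + 1) = p' 0)
    (u : ∀ l, Fin (p l) → ℝ) (u' : ∀ l, Fin (p' l) → ℝ) (v : Fin (p' 0) → ℝ) :
    ∀ l, Fin (qfun L p p' l) → ℝ := fun l =>
  if h : l ≤ L then fun i => u l (Fin.cast (qfun_le p p' (by omega)) i)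
  else if h2 : l = L + 1 then fun i => v (Fin.cast (by rw [qfun_hi hk (by omega)]; congr 1; omega) i)
  else fun i => u' (l - (L + 1)) (Fin.cast (qfun_hi hk (by omega)) i)

lemma app_congr {p' : ℕ → ℕ} (F : ∀ l, Fin (p' l) → ℝ) {a b : ℕ} (h : a = b) (i : Fin (p' a)) :
    F a i = F b (Fin.cast (congrArg p' h) i) := by subst h; rfl

lemma evalA (L : ℕ) (p p' : ℕ → ℕ) (hk : p (L + 1) = p' 0)
    (W : ∀ l, Matrix (Fin (p (l + 1))) (Fin (p l)) ℝ)
    (W' : ∀ l, Matrix (Fin (p' (l + 1))) (Fin (p' l)) ℝ)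
    (u : ∀ l, Fin (p l) → ℝ) (u' : ∀ l, Fin (p' l) → ℝ) (v : Fin (p' 0) → ℝ)
    (l : ℕ) (hl : l ≤ L) (x : Fin (qfun L p p' 0) → ℝ) (j : Fin (qfun L p p' (l + 1))) :
    netEval (qfun L p p') (Wn L p p' hk W W') (vn L p p' hk u u' v) l x j
      = netEval p W u l (fun i => x (Fin.cast (qfun_le p p' (by omega)).symm i))
          (Fin.cast (qfun_le p p' (by omega)) j) := by
  induction l with
  | zero =>
      show ((Wn L p p' hk W W') 0).mulVec x j = _
      rw [Wn, dif_pos (Nat.zero_le L), mulVec_submatrix_cast]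
      rfl
  | succ l ih =>
      show ((Wn L p p' hk W W') (l + 1)).mulVec _ j = _
      rw [Wn, dif_pos hl, mulVec_submatrix_cast]
      show (W (l + 1)).mulVec
          (fun i => max (netEval _ _ _ l x (Fin.cast _ i) - vn L p p' hk u u' v (l + 1) (Fin.cast _ i)) 0) _ = _
      congr 1
      funext i
      rw [ih (by omega), vn, dif_pos hl]
      congr 1

lemma mulVec_index_congr {p' : ℕ → ℕ} (W' : ∀ l, Matrix (Fin (p' (l + 1))) (Fin (p' l)) ℝ)
    {a b : ℕ} (h : a = b) (x : Fin (p' a) → ℝ) (j : Fin (p' (a + 1))) :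
    (W' a).mulVec x j = (W' b).mulVec (fun i => x (Fin.cast (congrArg p' h.symm) i))
      (Fin.cast (congrArg (fun t => p' (t + 1)) h) j) := by subst h; rfl

lemma evalB (L L' : ℕ) (p p' : ℕ → ℕ) (hk : p (L + 1) = p' 0)
    (W : ∀ l, Matrix (Fin (p (l + 1))) (Fin (p l)) ℝ)
    (W' : ∀ l, Matrix (Fin (p' (l + 1))) (Fin (p' l)) ℝ)
    (u : ∀ l, Fin (p l) → ℝ) (u' : ∀ l, Fin (p' l) → ℝ) (v : Fin (p' 0) → ℝ)
    (m n : ℕ) (hn : n = L + 1 + m)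
    (x : Fin (qfun L p p' 0) → ℝ) (j : Fin (qfun L p p' (n + 1))) :
    netEval (qfun L p p') (Wn L p p' hk W W') (vn L p p' hk u u' v) n x j
      = netEval p' W' u' m
          (fun i => max (netEval p W u L (fun i' => x (Fin.cast (qfun_le p p' (by omega)).symm i'))
              (Fin.cast hk.symm i) - v i) 0)
          (Fin.cast (by rw [qfun_hi' hk (by omega)]; congr 1; omega) j) := by
  induction m generalizing n j with
  | zero =>
      subst hn
      show ((Wn L p p' hk W W') (L + 1)).mulVec _ j = _
      rw [Wn, dif_neg (by omega), mulVec_submatrix_cast]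
      have h0 : L + 1 - (L + 1) = 0 := Nat.sub_self _
      rw [mulVec_index_congr W' h0]
      congr 1
      funext i
      show max (netEval _ _ _ L x (Fin.cast _ (Fin.cast _ i))
          - vn L p p' hk u u' v (L + 1) (Fin.cast _ (Fin.cast _ i))) 0 = _
      rw [evalA L p p' hk W W' u u' v L le_rfl, vn, dif_neg (by omega), dif_pos rfl]
      congr 1
  | succ m ih =>
      subst hn
      show ((Wn L p p' hk W W') (L + 1 + m + 1)).mulVec _ j = _
      rw [Wn, dif_neg (by omega), mulVec_submatrix_cast]
      have h0 : L + 1 + m + 1 - (L + 1) = m + 1 := by omega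
      rw [mulVec_index_congr W' h0]
      congr 1
      funext i
      show max (netEval _ _ _ (L + 1 + m) x (Fin.cast _ (Fin.cast _ i))
          - vn L p p' hk u u' v (L + 1 + m + 1) (Fin.cast _ (Fin.cast _ i))) 0 = _
      rw [ih (L + 1 + m) rfl, vn, dif_neg (by omega), dif_neg (by omega),
        app_congr u' h0]
      congr 1

/-- Composition of ReLU networks: if `f ∈ ℱ(L, p)`, `g ∈ ℱ(L', p')` with
`p_{L+1} = p'_0` and `v ∈ [−1,1]^{p_{L+1}}`, then
`g ∘ σ_v(f) ∈ ℱ(L + L' + 1, (p_0, …, p_{L+1}, p'_1, …, p'_{L'+1}))`. -/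
theorem netClass_comp (L L' d k e : ℕ) (p p' : ℕ → ℕ)
    (f : (Fin d → ℝ) → Fin k → ℝ) (g : (Fin k → ℝ) → Fin e → ℝ)
    (hf : f ∈ NetClassF L d k p) (hg : g ∈ NetClassF L' k e p')
    (v : Fin k → ℝ) (hv : ∀ i, |v i| ≤ 1) :
    (fun x => g fun i => max (f x i - v i) 0)
      ∈ NetClassF (L + L' + 1) d e
        (fun l => if l ≤ L + 1 then p l else p' (l - (L + 1))) := by
  obtain ⟨h0, h1, W, u, ⟨hWb, hub⟩, hfe⟩ := hf
  obtain ⟨h0', h1', W', u', ⟨hW'b, hu'b⟩, hge⟩ := hg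
  have hk : p (L + 1) = p' 0 := h1.trans h0'.symm
  show _ ∈ NetClassF (L + L' + 1) d e (qfun L p p')
  refine ⟨(qfun_le p p' (by omega)).trans h0,
    (qfun_hi hk (by omega)).trans (by rw [show L + L' + 1 + 1 - (L + 1) = L' + 1 by omega, h1']),
    Wn L p p' hk W W', vn L p p' hk u u' (fun i => v (Fin.cast h0' i)), ⟨?_, ?_⟩, ?_⟩
  · intro l hl i j
    by_cases h : l ≤ L
    · rw [Wn]; simp only [dif_pos h, Matrix.submatrix_apply]
      exact hWb l h _ _
    · rw [Wn]; simp only [dif_neg h, Matrix.submatrix_apply]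
      exact hW'b (l - (L + 1)) (by omega) _ _
  · intro l h1l hlL i
    by_cases h : l ≤ L
    · rw [vn]; simp only [dif_pos h]
      exact hub l h1l h _
    · by_cases h2 : l = L + 1
      · rw [vn]; simp only [dif_neg h, dif_pos h2]
        exact hv _
      · rw [vn]; simp only [dif_neg h, dif_neg h2]
        exact hu'b (l - (L + 1)) (by omega) (by omega) _
  · intro x
    funext j
    show g (fun i => max (f x i - v i) 0) j = _
    rw [hge, hfe]
    rw [evalB L L' p p' hk W W' u u' (fun i => v (Fin.cast h0' i)) L' (L + L' + 1) (by omega)]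
    rfl
end

section
/- Parallelization: if f ∈ ℱ(L, p, s) and g ∈ ℱ(L, p', s') with p_0 = p'_0, then the function x ↦ (f(x), g(x)) belongs to ℱ(L, (p_0, p_1 + p'_1, …, p_{L+1} + p'_{L+1}), s + s'). -/
open Finset

section ParallelAux

lemma matSupp_eq_sum {m n : ℕ} (A : Matrix (Fin m) (Fin n) ℝ) :
    matSupp A = ∑ i, vecSupp (A i) := by
  classical
  simp [matSupp, vecSupp, Finset.card_filter, Fintype.sum_prod_type]

lemma vecSupp_append {m n : ℕ} (u : Fin m → ℝ) (w : Fin n → ℝ) :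
    vecSupp (Fin.append u w) = vecSupp u + vecSupp w := by
  classical
  simp [vecSupp, Finset.card_filter, Fin.sum_univ_add, Fin.append_left, Fin.append_right]

lemma vecSupp_zero {n : ℕ} : vecSupp (0 : Fin n → ℝ) = 0 := by
  simp [vecSupp]

lemma matSupp_block {a b c e : ℕ} (A : Matrix (Fin a) (Fin b) ℝ) (B : Matrix (Fin c) (Fin e) ℝ) :
    matSupp (Matrix.of fun i j => Fin.addCases (motive := fun _ => ℝ)
      (fun i1 => Fin.append (A i1) 0 j) (fun i2 => Fin.append (0 : Fin b → ℝ) (B i2) j) i)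
    = matSupp A + matSupp B := by
  rw [matSupp_eq_sum, matSupp_eq_sum, matSupp_eq_sum, Fin.sum_univ_add]
  congr 1
  · refine Finset.sum_congr rfl fun i1 _ => ?_
    have : (Matrix.of fun i j => Fin.addCases (motive := fun _ => ℝ)
      (fun i1 => Fin.append (A i1) 0 j) (fun i2 => Fin.append (0 : Fin b → ℝ) (B i2) j) i)
        (Fin.castAdd c i1) = fun j => Fin.append (A i1) 0 j := by
      funext j; simp [Fin.addCases_left]
    rw [this]
    have := vecSupp_append (A i1) (0 : Fin e → ℝ)
    simpa [vecSupp_zero] using this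
  · refine Finset.sum_congr rfl fun i2 _ => ?_
    have : (Matrix.of fun i j => Fin.addCases (motive := fun _ => ℝ)
      (fun i1 => Fin.append (A i1) 0 j) (fun i2 => Fin.append (0 : Fin b → ℝ) (B i2) j) i)
        (Fin.natAdd a i2) = fun j => Fin.append (0 : Fin b → ℝ) (B i2) j := by
      funext j; simp [Fin.addCases_right]
    rw [this]
    have := vecSupp_append (0 : Fin b → ℝ) (B i2)
    simpa [vecSupp_zero] using this

lemma matSupp_vstack {a c b p'0 : ℕ} (h : p'0 = b) (A : Matrix (Fin a) (Fin b) ℝ)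
    (B : Matrix (Fin c) (Fin p'0) ℝ) :
    matSupp (Matrix.of fun i j => Fin.addCases (motive := fun _ => ℝ)
      (fun i1 => A i1 j) (fun i2 => B i2 (Fin.cast h.symm j)) i)
    = matSupp A + matSupp B := by
  subst h
  rw [matSupp_eq_sum, matSupp_eq_sum, matSupp_eq_sum, Fin.sum_univ_add]
  congr 1
  · refine Finset.sum_congr rfl fun i1 _ => ?_
    congr 1
    funext j; simp [Fin.addCases_left]
  · refine Finset.sum_congr rfl fun i2 _ => ?_
    congr 1
    funext j; simp [Fin.addCases_right, Fin.cast_refl]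

lemma vstack_mulVec {a c b p'0 : ℕ} (h : p'0 = b) (A : Matrix (Fin a) (Fin b) ℝ)
    (B : Matrix (Fin c) (Fin p'0) ℝ) (x : Fin b → ℝ) (j : Fin (a + c)) :
    Matrix.mulVec (Matrix.of fun i jj => Fin.addCases (motive := fun _ => ℝ)
      (fun i1 => A i1 jj) (fun i2 => B i2 (Fin.cast h.symm jj)) i) x j
    = Fin.append (A.mulVec x) (B.mulVec fun i => x (Fin.cast h i)) j := by
  subst h
  induction j using Fin.addCases with
  | left j1 => simp [Matrix.mulVec, dotProduct, Fin.addCases_left, Fin.append_left]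
  | right j2 => simp [Matrix.mulVec, dotProduct, Fin.addCases_right, Fin.append_right,
      Fin.cast_refl]

lemma block_mulVec {a b c e : ℕ} (A : Matrix (Fin a) (Fin b) ℝ) (B : Matrix (Fin c) (Fin e) ℝ)
    (u : Fin b → ℝ) (w : Fin e → ℝ) (j : Fin (a + c)) :
    Matrix.mulVec (Matrix.of fun i jj => Fin.addCases (motive := fun _ => ℝ)
      (fun i1 => Fin.append (A i1) 0 jj) (fun i2 => Fin.append (0 : Fin b → ℝ) (B i2) jj) i)
      (Fin.append u w) j
    = Fin.append (A.mulVec u) (B.mulVec w) j := by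
  induction j using Fin.addCases with
  | left j1 => simp [Matrix.mulVec, dotProduct, Fin.sum_univ_add, Fin.addCases_left,
      Fin.append_left, Fin.append_right]
  | right j2 => simp [Matrix.mulVec, dotProduct, Fin.sum_univ_add, Fin.addCases_right,
      Fin.append_left, Fin.append_right]

/-- Weight matrices of the parallelized network. -/
noncomputable def parW (p p' : ℕ → ℕ) (h0' : p' 0 = p 0)
    (W : ∀ l : ℕ, Matrix (Fin (p (l + 1))) (Fin (p l)) ℝ)
    (W' : ∀ l : ℕ, Matrix (Fin (p' (l + 1))) (Fin (p' l)) ℝ) :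
    ∀ l : ℕ, Matrix (Fin (if l + 1 = 0 then p 0 else p (l + 1) + p' (l + 1)))
      (Fin (if l = 0 then p 0 else p l + p' l)) ℝ
  | 0 => Matrix.of fun i j => Fin.addCases (motive := fun _ => ℝ)
      (fun i1 => W 0 i1 j) (fun i2 => W' 0 i2 (Fin.cast h0'.symm j)) i
  | (l + 1) => Matrix.of fun i j => Fin.addCases (motive := fun _ => ℝ)
      (fun i1 => Fin.append (W (l + 1) i1) 0 j)
      (fun i2 => Fin.append (0 : Fin (p (l + 1)) → ℝ) (W' (l + 1) i2) j) i

/-- Shift vectors of the parallelized network. -/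
noncomputable def parV (p p' : ℕ → ℕ)
    (v : ∀ l : ℕ, Fin (p l) → ℝ) (v' : ∀ l : ℕ, Fin (p' l) → ℝ) :
    ∀ l : ℕ, Fin (if l = 0 then p 0 else p l + p' l) → ℝ
  | 0 => 0
  | (l + 1) => Fin.append (v (l + 1)) (v' (l + 1))

lemma parEval (p p' : ℕ → ℕ) (h0' : p' 0 = p 0)
    (W : ∀ l : ℕ, Matrix (Fin (p (l + 1))) (Fin (p l)) ℝ)
    (W' : ∀ l : ℕ, Matrix (Fin (p' (l + 1))) (Fin (p' l)) ℝ)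
    (v : ∀ l : ℕ, Fin (p l) → ℝ) (v' : ∀ l : ℕ, Fin (p' l) → ℝ)
    (x : Fin (p 0) → ℝ) :
    ∀ (n : ℕ) (j : Fin (p (n + 1) + p' (n + 1))),
      netEval (fun l => if l = 0 then p 0 else p l + p' l)
        (parW p p' h0' W W') (parV p p' v v') n x j
      = Fin.append (netEval p W v n x)
          (netEval p' W' v' n (fun i => x (Fin.cast h0' i))) j := by
  intro n
  induction n with
  | zero =>
    intro j
    exact vstack_mulVec h0' (W 0) (W' 0) x j
  | succ n ih =>
    intro j
    have hinner : (fun i : Fin (p (n + 1) + p' (n + 1)) =>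
        max (netEval (fun l => if l = 0 then p 0 else p l + p' l)
          (parW p p' h0' W W') (parV p p' v v') n x i
          - Fin.append (v (n + 1)) (v' (n + 1)) i) 0)
        = Fin.append
            (fun i1 => max (netEval p W v n x i1 - v (n + 1) i1) 0)
            (fun i2 => max (netEval p' W' v' n (fun i => x (Fin.cast h0' i)) i2 - v' (n + 1) i2) 0) := by
      funext i
      induction i using Fin.addCases with
      | left i1 => rw [ih (Fin.castAdd _ i1)]; simp [Fin.append_left]
      | right i2 => rw [ih (Fin.natAdd _ i2)]; simp [Fin.append_right]
    calc netEval (fun l => if l = 0 then p 0 else p l + p' l)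
          (parW p p' h0' W W') (parV p p' v v') (n + 1) x j
        = Matrix.mulVec (parW p p' h0' W W' (n + 1))
            (fun i : Fin (p (n + 1) + p' (n + 1)) =>
              max (netEval (fun l => if l = 0 then p 0 else p l + p' l)
                (parW p p' h0' W W') (parV p p' v v') n x i
                - Fin.append (v (n + 1)) (v' (n + 1)) i) 0) j := rfl
      _ = Matrix.mulVec (parW p p' h0' W W' (n + 1))
            (Fin.append
              (fun i1 => max (netEval p W v n x i1 - v (n + 1) i1) 0)
              (fun i2 => max (netEval p' W' v' n (fun i => x (Fin.cast h0' i)) i2 - v' (n + 1) i2) 0)) j := by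
          rw [hinner]
      _ = Fin.append
            ((W (n + 1)).mulVec fun i1 => max (netEval p W v n x i1 - v (n + 1) i1) 0)
            ((W' (n + 1)).mulVec fun i2 => max (netEval p' W' v' n (fun i => x (Fin.cast h0' i)) i2 - v' (n + 1) i2) 0) j :=
          block_mulVec (W (n + 1)) (W' (n + 1)) _ _ j
      _ = Fin.append (netEval p W v (n + 1) x)
            (netEval p' W' v' (n + 1) (fun i => x (Fin.cast h0' i))) j := rfl

end ParallelAux

/-- Parallelization: if `f ∈ ℱ(L, p, s)` and `g ∈ ℱ(L, p', s')` with the same input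
dimension, then `x ↦ (f(x), g(x))` belongs to
`ℱ(L, (p_0, p_1 + p'_1, …, p_{L+1} + p'_{L+1}), s + s')`. -/
theorem netClass_parallel (L d k k' s s' : ℕ) (p p' : ℕ → ℕ)
    (f : (Fin d → ℝ) → Fin k → ℝ) (g : (Fin d → ℝ) → Fin k' → ℝ)
    (hf : f ∈ NetClass L d k p s) (hg : g ∈ NetClass L d k' p' s') :
    (fun x => Fin.append (f x) (g x))
      ∈ NetClass L d (k + k') (fun l => if l = 0 then d else p l + p' l) (s + s') := by
  obtain ⟨h0, h1, Wf, vf, hOKf, hsf, hEf⟩ := hf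
  subst h0
  obtain ⟨h0', h1', Wg, vg, hOKg, hsg, hEg⟩ := hg
  subst h1
  subst h1'
  refine ⟨rfl, rfl, parW p p' h0' Wf Wg, parV p p' vf vg, ?_, ?_, ?_⟩
  · constructor
    · intro l hl
      cases l with
      | zero =>
        show ∀ (i : Fin (p 1 + p' 1)) (j : Fin (p 0)), |parW p p' h0' Wf Wg 0 i j| ≤ 1
        intro i j
        induction i using Fin.addCases with
        | left i1 => simpa [parW, Fin.addCases_left] using hOKf.1 0 (Nat.zero_le L) i1 j
        | right i2 => simpa [parW, Fin.addCases_right] using hOKg.1 0 (Nat.zero_le L) i2 (Fin.cast h0'.symm j)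
      | succ m =>
        show ∀ (i : Fin (p (m + 2) + p' (m + 2))) (j : Fin (p (m + 1) + p' (m + 1))), |parW p p' h0' Wf Wg (m + 1) i j| ≤ 1
        intro i j
        have hW : ∀ (i : Fin (p (m + 2) + p' (m + 2))) (j : Fin (p (m + 1) + p' (m + 1))),
            parW p p' h0' Wf Wg (m + 1) i j = Fin.addCases (motive := fun _ => ℝ)
              (fun i1 => Fin.append (Wf (m + 1) i1) 0 j)
              (fun i2 => Fin.append (0 : Fin (p (m + 1)) → ℝ) (Wg (m + 1) i2) j) i := fun _ _ => rfl
        induction i using Fin.addCases with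
        | left i1 =>
          induction j using Fin.addCases with
          | left j1 => simpa [hW, Fin.addCases_left, Fin.append_left] using hOKf.1 (m + 1) hl i1 j1
          | right j2 => simp [hW, Fin.addCases_left, Fin.append_right]
        | right i2 =>
          induction j using Fin.addCases with
          | left j1 => simp [hW, Fin.addCases_right, Fin.append_left]
          | right j2 => simpa [hW, Fin.addCases_right, Fin.append_right] using hOKg.1 (m + 1) hl i2 j2
    · intro l h1l hlL
      obtain ⟨m, rfl⟩ : ∃ m, l = m + 1 := ⟨l - 1, by omega⟩
      show ∀ i : Fin (p (m + 1) + p' (m + 1)), |parV p p' vf vg (m + 1) i| ≤ 1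
      intro i
      induction i using Fin.addCases with
      | left i1 => simpa [parV, Fin.append_left] using hOKf.2 (m + 1) (by omega) hlL i1
      | right i2 => simpa [parV, Fin.append_right] using hOKg.2 (m + 1) (by omega) hlL i2
  · have hms : ∀ l, matSupp (parW p p' h0' Wf Wg l) = matSupp (Wf l) + matSupp (Wg l) := by
      intro l
      cases l with
      | zero => exact matSupp_vstack h0' (Wf 0) (Wg 0)
      | succ m => exact matSupp_block (Wf (m + 1)) (Wg (m + 1))
    have A1 : ∑ l ∈ Finset.range (L + 1), matSupp (parW p p' h0' Wf Wg l)
        = (∑ l ∈ Finset.range (L + 1), matSupp (Wf l))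
          + ∑ l ∈ Finset.range (L + 1), matSupp (Wg l) := by
      rw [← Finset.sum_add_distrib]
      exact Finset.sum_congr rfl fun l _ => hms l
    have A2 : ∑ l ∈ Finset.Icc 1 L, vecSupp (parV p p' vf vg l)
        = (∑ l ∈ Finset.Icc 1 L, vecSupp (vf l))
          + ∑ l ∈ Finset.Icc 1 L, vecSupp (vg l) := by
      rw [← Finset.sum_add_distrib]
      refine Finset.sum_congr rfl fun l hl => ?_
      obtain ⟨m, rfl⟩ : ∃ m, l = m + 1 :=
        ⟨l - 1, by have := (Finset.mem_Icc.mp hl).1; omega⟩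
      exact vecSupp_append (vf (m + 1)) (vg (m + 1))
    have hsp : netSparsity L (fun l => if l = 0 then p 0 else p l + p' l)
        (parW p p' h0' Wf Wg) (parV p p' vf vg)
        = netSparsity L p Wf vf + netSparsity L p' Wg vg := by
      unfold netSparsity
      rw [A1, A2]
      ring
    rw [hsp]
    exact add_le_add hsf hsg
  · intro x
    funext j
    have hfx : f x = netEval p Wf vf L x := hEf x
    have hgx : g x = netEval p' Wg vg L (fun i => x (Fin.cast h0' i)) := hEg x
    show Fin.append (f x) (g x) j = _
    rw [hfx, hgx]
    exact (parEval p p' h0' Wf Wg vf vg x L j).symm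
end

section
/- Removing superfluous units: for any architecture, ℱ(L, p, s) = ℱ(L, (p_0, p_1 ∧ s, p_2 ∧ s, …, p_L ∧ s, p_{L+1}), s), i.e., capping each hidden-layer width at the sparsity s does not change the function class. -/
open Finset

lemma netEval_eq_zero (p : ℕ → ℕ)
    (W : ∀ l : ℕ, Matrix (Fin (p (l + 1))) (Fin (p l)) ℝ)
    (v : ∀ l : ℕ, Fin (p l) → ℝ) (l : ℕ) (x : Fin (p 0) → ℝ) (i : Fin (p (l + 1)))
    (h : ∀ j, W l i j = 0) : netEval p W v l x i = 0 := by
  cases l with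
  | zero => simp [netEval, Matrix.mulVec, dotProduct, h]
  | succ m => simp [netEval, Matrix.mulVec, dotProduct, h]

lemma eval_agree (L : ℕ) (p q : ℕ → ℕ)
    (W : ∀ l : ℕ, Matrix (Fin (p (l + 1))) (Fin (p l)) ℝ)
    (v : ∀ l : ℕ, Fin (p l) → ℝ)
    (W' : ∀ l : ℕ, Matrix (Fin (q (l + 1))) (Fin (q l)) ℝ)
    (v' : ∀ l : ℕ, Fin (q l) → ℝ)
    (ι : ∀ l, Fin (q l) → Fin (p l))
    (hinj : ∀ l, Function.Injective (ι l))
    (hsurj0 : Function.Surjective (ι 0))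
    (hW' : ∀ l, W' l = fun i j => W l (ι (l + 1) i) (ι l j))
    (hv' : ∀ l, v' l = fun i => v l (ι l i))
    (hzero : ∀ l < L, ∀ i : Fin (p (l + 1)), i ∉ Set.range (ι (l + 1)) →
        (∀ j, W l i j = 0) ∧ v (l + 1) i = 0)
    (x : Fin (p 0) → ℝ) :
    ∀ l ≤ L, ∀ i : Fin (q (l + 1)),
      netEval q W' v' l (fun j => x (ι 0 j)) i = netEval p W v l x (ι (l + 1) i) := by
  intro l
  induction l with
  | zero =>
    intro _ i
    simp only [netEval, hW', Matrix.mulVec, dotProduct]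
    exact Fintype.sum_bijective (ι 0) ⟨hinj 0, hsurj0⟩ _ _ (fun j => rfl)
  | succ m ih =>
    intro hm i
    have hmL : m < L := Nat.lt_of_succ_le hm
    have lhs : netEval q W' v' (m + 1) (fun j => x (ι 0 j)) i =
        ∑ j : Fin (q (m + 1)),
          W (m + 1) (ι (m + 1 + 1) i) (ι (m + 1) j) *
            max (netEval p W v m x (ι (m + 1) j) - v (m + 1) (ι (m + 1) j)) 0 := by
      simp only [netEval, Matrix.mulVec, dotProduct, hW', hv']
      refine Finset.sum_congr rfl fun j _ => ?_
      rw [ih hmL.le j]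
    have rhs : netEval p W v (m + 1) x (ι (m + 1 + 1) i) =
        ∑ j' : Fin (p (m + 1)),
          W (m + 1) (ι (m + 1 + 1) i) j' *
            max (netEval p W v m x j' - v (m + 1) j') 0 := by
      simp only [netEval, Matrix.mulVec, dotProduct]
    rw [lhs, rhs]
    rw [← Finset.sum_image (f := fun j' : Fin (p (m+1)) =>
        W (m + 1) (ι (m + 1 + 1) i) j' * max (netEval p W v m x j' - v (m + 1) j') 0)
        (g := ι (m + 1)) (s := univ) (fun a _ b _ h => hinj _ h)]
    refine Finset.sum_subset (Finset.subset_univ _) fun j' _ hj' => ?_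
    have hnr : j' ∉ Set.range (ι (m + 1)) := by
      rintro ⟨a, rfl⟩
      exact hj' (Finset.mem_image.mpr ⟨a, Finset.mem_univ a, rfl⟩)
    obtain ⟨hrow, hv0⟩ := hzero m hmL j' hnr
    rw [netEval_eq_zero p W v m x j' hrow, hv0]
    simp

lemma matSupp_comp_le {m n m' n' : ℕ} (A : Matrix (Fin m) (Fin n) ℝ)
    (f : Fin m' → Fin m) (g : Fin n' → Fin n) (hf : Function.Injective f)
    (hg : Function.Injective g) :
    matSupp (fun i j => A (f i) (g j) : Matrix (Fin m') (Fin n') ℝ) ≤ matSupp A := by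
  classical
  unfold matSupp
  refine Finset.card_le_card_of_injOn (Prod.map f g) ?_ ((hf.prodMap hg)).injOn
  intro ij hij
  simp only [Finset.mem_coe, Finset.mem_filter, Finset.mem_univ, true_and] at hij ⊢
  exact hij

lemma vecSupp_comp_le {n n' : ℕ} (u : Fin n → ℝ) (g : Fin n' → Fin n)
    (hg : Function.Injective g) : vecSupp (fun i => u (g i)) ≤ vecSupp u := by
  classical
  unfold vecSupp
  refine Finset.card_le_card_of_injOn g ?_ hg.injOn
  intro i hi
  simp only [Finset.mem_coe, Finset.mem_filter, Finset.mem_univ, true_and] at hi ⊢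
  exact hi

lemma matSupp_pad_le {m n m' n' : ℕ} (hm : m' ≤ m) (hn : n' ≤ n)
    (A : Matrix (Fin m') (Fin n') ℝ) :
    matSupp (fun i j => if h : (i : ℕ) < m' ∧ (j : ℕ) < n' then A ⟨i, h.1⟩ ⟨j, h.2⟩ else 0 :
      Matrix (Fin m) (Fin n) ℝ) ≤ matSupp A := by
  classical
  unfold matSupp
  refine le_trans (Finset.card_le_card ?_
    (t := (Finset.univ.filter fun ij : Fin m' × Fin n' => A ij.1 ij.2 ≠ 0).image
      (Prod.map (Fin.castLE hm) (Fin.castLE hn)))) Finset.card_image_le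
  intro ij hij
  simp only [Finset.mem_filter, Finset.mem_univ, true_and] at hij
  by_cases h : (ij.1 : ℕ) < m' ∧ (ij.2 : ℕ) < n'
  · rw [dif_pos h] at hij
    refine Finset.mem_image.mpr ⟨(⟨ij.1, h.1⟩, ⟨ij.2, h.2⟩), ?_, ?_⟩
    · simp only [Finset.mem_filter, Finset.mem_univ, true_and]
      exact hij
    · rfl
  · rw [dif_neg h] at hij
    exact absurd rfl hij

lemma vecSupp_pad_le {n n' : ℕ} (hn : n' ≤ n) (u : Fin n' → ℝ) :
    vecSupp (fun i => if h : (i : ℕ) < n' then u ⟨i, h⟩ else 0 : Fin n → ℝ) ≤ vecSupp u := by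
  classical
  unfold vecSupp
  refine le_trans (Finset.card_le_card ?_
    (t := (Finset.univ.filter fun i : Fin n' => u i ≠ 0).image (Fin.castLE hn)))
    Finset.card_image_le
  intro i hi
  simp only [Finset.mem_filter, Finset.mem_univ, true_and] at hi
  by_cases h : (i : ℕ) < n'
  · rw [dif_pos h] at hi
    refine Finset.mem_image.mpr ⟨⟨i, h⟩, ?_, rfl⟩
    simp only [Finset.mem_filter, Finset.mem_univ, true_and]
    exact hi
  · rw [dif_neg h] at hi
    exact absurd rfl hi


/-- Removing superfluous units: capping every hidden-layer width at the sparsity `s`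
does not change the network class:
`ℱ(L, p, s) = ℱ(L, (p_0, p_1 ∧ s, …, p_L ∧ s, p_{L+1}), s)`. -/
theorem netClass_remove_units (L d k s : ℕ) (p : ℕ → ℕ) :
    NetClass L d k p s
      = NetClass L d k (fun l => if l = 0 ∨ l = L + 1 then p l else min (p l) s) s := by
  classical
  set q : ℕ → ℕ := fun l => if l = 0 ∨ l = L + 1 then p l else min (p l) s with hqdef
  have hq0 : q 0 = p 0 := by rw [hqdef]; simp
  have hqL : q (L + 1) = p (L + 1) := by rw [hqdef]; simp
  have hqmid : ∀ m, m < L → q (m + 1) = min (p (m + 1)) s := by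
    intro m hm
    rw [hqdef]
    dsimp only
    rw [if_neg]
    push_neg
    exact ⟨Nat.succ_ne_zero m, by omega⟩
  have hle : ∀ l, q l ≤ p l := by
    intro l
    rw [hqdef]
    dsimp only
    split
    · exact le_rfl
    · exact min_le_left _ _
  ext f
  constructor
  · rintro ⟨h0, h1, W, v, ⟨hWb, hvb⟩, hsp, hf⟩
    have He : ∀ m, m < L → ∃ e : Fin (q (m + 1)) → Fin (p (m + 1)),
        Function.Injective e ∧
        ∀ i : Fin (p (m + 1)), ((∃ j, W m i j ≠ 0) ∨ v (m + 1) i ≠ 0) → i ∈ Set.range e := by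
      intro m hm
      set A : Finset (Fin (p (m + 1))) :=
        univ.filter fun i => (∃ j, W m i j ≠ 0) ∨ v (m + 1) i ≠ 0 with hA
      have hA1 : (univ.filter fun i : Fin (p (m + 1)) => ∃ j, W m i j ≠ 0).card
          ≤ matSupp (W m) := by
        unfold matSupp
        refine le_trans (Finset.card_le_card (t := (univ.filter
            fun ij : Fin (p (m + 1)) × Fin (p m) => W m ij.1 ij.2 ≠ 0).image Prod.fst) ?_)
          Finset.card_image_le
        intro i hi
        simp only [Finset.mem_filter, Finset.mem_univ, true_and] at hi
        obtain ⟨j, hj⟩ := hi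
        exact Finset.mem_image.mpr ⟨(i, j), by simp [hj], rfl⟩
      have hA2 : (univ.filter fun i : Fin (p (m + 1)) => v (m + 1) i ≠ 0).card
          ≤ vecSupp (v (m + 1)) := by
        unfold vecSupp
        exact le_rfl
      have hAcard : A.card ≤ q (m + 1) := by
        rw [hqmid m hm]
        refine le_min ?_ ?_
        · exact le_trans (Finset.card_le_card (Finset.filter_subset _ _)) (by simp)
        · have hsub : A ⊆ (univ.filter fun i : Fin (p (m + 1)) => ∃ j, W m i j ≠ 0) ∪
              (univ.filter fun i : Fin (p (m + 1)) => v (m + 1) i ≠ 0) := by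
            intro i hi
            simp only [hA, Finset.mem_filter, Finset.mem_univ, true_and, Finset.mem_union] at hi ⊢
            exact hi
          have hmat : matSupp (W m) ≤ ∑ l ∈ Finset.range (L + 1), matSupp (W l) :=
            Finset.single_le_sum (f := fun l => matSupp (W l)) (fun _ _ => Nat.zero_le _)
              (Finset.mem_range.mpr (by omega))
          have hvec : vecSupp (v (m + 1)) ≤ ∑ l ∈ Finset.Icc 1 L, vecSupp (v l) :=
            Finset.single_le_sum (f := fun l => vecSupp (v l)) (fun _ _ => Nat.zero_le _)
              (Finset.mem_Icc.mpr ⟨by omega, by omega⟩)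
          calc A.card ≤ _ := Finset.card_le_card hsub
            _ ≤ _ + _ := Finset.card_union_le _ _
            _ ≤ matSupp (W m) + vecSupp (v (m + 1)) := Nat.add_le_add hA1 hA2
            _ ≤ netSparsity L p W v := Nat.add_le_add hmat hvec
            _ ≤ s := hsp
      have hcard2 : q (m + 1) ≤ Fintype.card (Fin (p (m + 1))) := by
        simpa using hle (m + 1)
      obtain ⟨t, hAt, ht⟩ := Finset.exists_superset_card_eq hAcard hcard2
      refine ⟨fun j => (t.orderIsoOfFin ht j : Fin (p (m + 1))), ?_, ?_⟩
      · intro a b hab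
        exact (t.orderIsoOfFin ht).injective (Subtype.ext hab)
      · intro i hi
        have hiA : i ∈ A := by
          rw [hA]
          simp only [Finset.mem_filter, Finset.mem_univ, true_and]
          exact hi
        have hit : i ∈ t := hAt hiA
        exact ⟨(t.orderIsoOfFin ht).symm ⟨i, hit⟩,
          congrArg Subtype.val ((t.orderIsoOfFin ht).apply_symm_apply ⟨i, hit⟩)⟩
    choose E hEinj hEcov using He
    obtain ⟨ι, hιinj, hι0, hιL, hιcov⟩ :
        ∃ ι : ∀ l, Fin (q l) → Fin (p l),
          (∀ l, Function.Injective (ι l)) ∧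
          (∀ i : Fin (q 0), ((ι 0 i : ℕ) = (i : ℕ))) ∧
          (∀ i : Fin (q (L + 1)), ((ι (L + 1) i : ℕ) = (i : ℕ))) ∧
          ∀ m, m < L → ∀ i : Fin (p (m + 1)),
            ((∃ j, W m i j ≠ 0) ∨ v (m + 1) i ≠ 0) → i ∈ Set.range (ι (m + 1)) := by
      refine ⟨fun l => match l with
        | 0 => Fin.castLE (hle 0)
        | (m + 1) => if h : m < L then E m h else Fin.castLE (hle (m + 1)), ?_, ?_, ?_, ?_⟩
      · intro l
        match l with
        | 0 => exact Fin.castLE_injective _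
        | (m + 1) =>
          by_cases h : m < L
          · simp only [dif_pos h]
            exact hEinj m h
          · simp only [dif_neg h]
            exact Fin.castLE_injective _
      · intro i; rfl
      · intro i
        simp only [dif_neg (lt_irrefl L)]
        rfl
      · intro m hm i hi
        simp only [dif_pos hm]
        exact hEcov m hm i hi
    refine ⟨hq0.trans h0, hqL.trans h1,
      (fun l => fun i j => W l (ι (l + 1) i) (ι l j)),
      (fun l i => v l (ι l i)), ⟨?_, ?_⟩, ?_, ?_⟩
    · intro l hl i j
      exact hWb l hl _ _
    · intro l h1l hLl i
      exact hvb l h1l hLl _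
    · refine le_trans ?_ hsp
      unfold netSparsity
      exact Nat.add_le_add
        (Finset.sum_le_sum fun l _ => matSupp_comp_le (W l) (ι (l + 1)) (ι l)
          (hιinj _) (hιinj _))
        (Finset.sum_le_sum fun l _ => vecSupp_comp_le (v l) (ι l) (hιinj _))
    · intro x
      rw [hf x]
      funext j
      have hsurj0 : Function.Surjective (ι 0) := by
        intro y
        refine ⟨⟨(y : ℕ), by rw [hq0]; exact y.2⟩, Fin.ext ?_⟩
        rw [hι0]
      have hz : ∀ l < L, ∀ i : Fin (p (l + 1)), i ∉ Set.range (ι (l + 1)) →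
          (∀ j, W l i j = 0) ∧ v (l + 1) i = 0 := by
        intro l hl i hi
        constructor
        · intro j'
          by_contra hne
          exact hi (hιcov l hl i (Or.inl ⟨j', hne⟩))
        · by_contra hne
          exact hi (hιcov l hl i (Or.inr hne))
      have key := eval_agree L p q W v _ _ ι hιinj hsurj0 (fun l => rfl) (fun l => rfl) hz
        (fun i => x (Fin.cast h0 i)) L le_rfl (Fin.cast (hqL.trans h1).symm j)
      rw [show (ι (L + 1) (Fin.cast (hqL.trans h1).symm j)) = Fin.cast h1.symm j from
        Fin.ext (by rw [hιL]; simp only [Fin.coe_cast])] at key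
      rw [show (fun j' : Fin (q 0) => (fun i => x (Fin.cast h0 i)) (ι 0 j')) =
          (fun i => x (Fin.cast (hq0.trans h0) i)) from
        funext fun j' => congrArg x (Fin.ext (hι0 j'))] at key
      exact key.symm
  · rintro ⟨h0', h1', W, v, ⟨hWb, hvb⟩, hsp, hf⟩
    set Wp : ∀ l : ℕ, Matrix (Fin (p (l + 1))) (Fin (p l)) ℝ :=
      fun l i j => if h : (i : ℕ) < q (l + 1) ∧ (j : ℕ) < q l then W l ⟨i, h.1⟩ ⟨j, h.2⟩ else 0
      with hWp
    set vp : ∀ l : ℕ, Fin (p l) → ℝ :=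
      fun l i => if h : (i : ℕ) < q l then v l ⟨i, h⟩ else 0 with hvp
    refine ⟨hq0.symm.trans h0', hqL.symm.trans h1', Wp, vp, ⟨?_, ?_⟩, ?_, ?_⟩
    · intro l hl i j
      rw [hWp]
      dsimp only
      split
      · exact hWb l hl _ _
      · simp
    · intro l h1l hLl i
      rw [hvp]
      dsimp only
      split
      · exact hvb l h1l hLl _
      · simp
    · refine le_trans ?_ hsp
      unfold netSparsity
      exact Nat.add_le_add
        (Finset.sum_le_sum fun l _ => matSupp_pad_le (hle (l + 1)) (hle l) (W l))
        (Finset.sum_le_sum fun l _ => vecSupp_pad_le (hle l) (v l))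
    · intro x
      rw [hf x]
      funext j
      have hW' : ∀ l, W l = fun i j =>
          Wp l (Fin.castLE (hle (l + 1)) i) (Fin.castLE (hle l) j) := by
        intro l
        funext i' j'
        rw [hWp]
        dsimp only
        have hc : ((Fin.castLE (hle (l + 1)) i' : Fin (p (l + 1))) : ℕ) < q (l + 1) ∧
            ((Fin.castLE (hle l) j' : Fin (p l)) : ℕ) < q l := ⟨i'.2, j'.2⟩
        rw [dif_pos hc]
        rfl
      have hv' : ∀ l, v l = fun i => vp l (Fin.castLE (hle l) i) := by
        intro l
        funext i'
        rw [hvp]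
        dsimp only
        have hc : ((Fin.castLE (hle l) i' : Fin (p l)) : ℕ) < q l := i'.2
        rw [dif_pos hc]
        rfl
      have hsurj0 : Function.Surjective (Fin.castLE (hle 0)) := by
        intro y
        exact ⟨⟨(y : ℕ), by rw [hq0]; exact y.2⟩, rfl⟩
      have hz : ∀ l < L, ∀ i : Fin (p (l + 1)), i ∉ Set.range (Fin.castLE (hle (l + 1))) →
          (∀ j, Wp l i j = 0) ∧ vp (l + 1) i = 0 := by
        intro l hl i hi
        have hge : ¬ ((i : ℕ) < q (l + 1)) := by
          intro hlt
          exact hi ⟨⟨(i : ℕ), hlt⟩, rfl⟩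
        constructor
        · intro j'
          rw [hWp]
          dsimp only
          rw [dif_neg (by tauto)]
        · rw [hvp]
          dsimp only
          rw [dif_neg hge]
      have key := eval_agree L p q Wp vp W v (fun l => Fin.castLE (hle l))
        (fun l => Fin.castLE_injective _) hsurj0 hW' hv' hz
        (fun i => x (Fin.cast (hq0.symm.trans h0') i)) L le_rfl (Fin.cast h1'.symm j)
      rw [show (Fin.castLE (hle (L + 1)) (Fin.cast h1'.symm j))
          = Fin.cast (hqL.symm.trans h1').symm j from Fin.ext rfl] at key
      rw [show (fun j' : Fin (q 0) =>
            (fun i => x (Fin.cast (hq0.symm.trans h0') i)) (Fin.castLE (hle 0) j')) =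
          (fun i => x (Fin.cast h0' i)) from funext fun j' => congrArg x (Fin.ext rfl)] at key
      exact key
end

section
/- For any positive integer m, there exists a ReLU network Mult_m ∈ ℱ(m+4, (2, 6, 6, …, 6, 1)) (depth m+4, hidden widths 6, parameters bounded by 1 in absolute value) such that Mult_m(x,y) ∈ [0,1] for all (x,y) ∈ [0,1]^2, |Mult_m(x,y) − xy| ≤ 2^{−m} for all x, y ∈ [0,1], and Mult_m(0, y) = Mult_m(x, 0) = 0 for all x, y. -/
open Finset

noncomputable section MultNetAux

/-- tooth function -/
def mnG (u : ℝ) : ℝ := 2*u - 4*max (u - 1/2) 0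

/-- scaled iterated sawtooth, sequential recursion -/
def mnR : ℕ → ℝ → ℝ
  | 0, u => u
  | (k+1), u => mnR k u / 2 - max (mnR k u - 2*(1/4)^(k+1)) 0

/-- approximant to the square -/
def mnQ : ℕ → ℝ → ℝ
  | 0, u => u
  | (k+1), u => mnQ k u - mnR (k+1) u

lemma mnG_mem {u : ℝ} (h0 : 0 ≤ u) (h1 : u ≤ 1) : 0 ≤ mnG u ∧ mnG u ≤ 1 := by
  rcases le_total u (1/2) with h | h
  · rw [mnG, max_eq_right (by linarith)]; constructor <;> linarith
  · rw [mnG, max_eq_left (by linarith)]; constructor <;> linarith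

lemma mn_sq_identity {u : ℝ} (h0 : 0 ≤ u) (h1 : u ≤ 1) :
    u - mnG u/2 + (mnG u)^2/4 = u^2 := by
  rcases le_total u (1/2) with h | h
  · rw [mnG, max_eq_right (by linarith)]; ring
  · rw [mnG, max_eq_left (by linarith)]; ring

lemma mn_max_quarter (w : ℝ) : max w 0 / 4 = max (w/4) 0 := by
  rcases le_total w 0 with h|h
  · rw [max_eq_right h, max_eq_right (by linarith)]; norm_num
  · rw [max_eq_left h, max_eq_left (by linarith)]

lemma mnR_scale (k : ℕ) (u : ℝ) : mnR (k+1) u = mnR k (mnG u) / 4 := by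
  induction k generalizing u with
  | zero =>
      show u / 2 - max (u - 2*(1/4)^1) 0 = mnG u / 4
      rw [mnG]
      norm_num
      ring
  | succ k ih =>
      have hz : mnR k (mnG u)/4/2 - max (mnR k (mnG u)/4 - 2*(1/4)^(k+1+1)) 0
          = (mnR k (mnG u)/2 - max (mnR k (mnG u) - 2*(1/4)^(k+1)) 0)/4 := by
        have h1 : mnR k (mnG u)/4 - 2*(1/4:ℝ)^(k+1+1) = (mnR k (mnG u) - 2*(1/4)^(k+1))/4 := by
          ring
        rw [h1, ← mn_max_quarter]; ring
      show mnR (k+1) u / 2 - max (mnR (k+1) u - 2*(1/4)^(k+1+1)) 0 = mnR (k+1) (mnG u) / 4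
      rw [ih u, hz]
      show _ = (mnR k (mnG u) / 2 - max (mnR k (mnG u) - 2*(1/4)^(k+1)) 0)/4
      rfl

lemma mnQ_rec (n : ℕ) (u : ℝ) : mnQ (n+1) u = u - mnG u/2 + mnQ n (mnG u)/4 := by
  induction n generalizing u with
  | zero =>
      show mnQ 0 u - mnR 1 u = _
      rw [mnR_scale 0 u]
      show u - mnG u / 4 = _
      show _ = u - mnG u/2 + mnG u/4
      ring
  | succ n ih =>
      show mnQ (n+1) u - mnR (n+1+1) u = _
      rw [ih, mnR_scale (n+1) u]
      show _ = u - mnG u/2 + (mnQ n (mnG u) - mnR (n+1) (mnG u))/4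
      ring

lemma mnR_nonneg : ∀ (k : ℕ) {u : ℝ}, 0 ≤ u → u ≤ 1 → 0 ≤ mnR k u := by
  intro k
  induction k with
  | zero => intro u h0 _; exact h0
  | succ k ih =>
      intro u h0 h1
      rw [mnR_scale]
      obtain ⟨hg0, hg1⟩ := mnG_mem h0 h1
      have := ih hg0 hg1
      linarith

lemma mnQ_err : ∀ (n : ℕ) {u : ℝ}, 0 ≤ u → u ≤ 1 →
    u^2 ≤ mnQ n u ∧ mnQ n u ≤ u^2 + (1/4)^(n+1) := by
  intro n
  induction n with
  | zero =>
      intro u h0 h1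
      constructor
      · show u^2 ≤ u; nlinarith
      · show (u:ℝ) ≤ u^2 + (1/4)^(0+1); nlinarith [sq_nonneg (u - 1/2)]
  | succ n ih =>
      intro u h0 h1
      rw [mnQ_rec]
      obtain ⟨hg0, hg1⟩ := mnG_mem h0 h1
      obtain ⟨ih1, ih2⟩ := ih hg0 hg1
      have hid := mn_sq_identity h0 h1
      have hp : ((1/4:ℝ))^(n+1+1) = (1/4)^(n+1) * (1/4) := pow_succ _ _
      constructor <;> nlinarith

lemma mnQ_nonneg (n : ℕ) {u : ℝ} (h0 : 0 ≤ u) (h1 : u ≤ 1) : 0 ≤ mnQ n u :=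
  le_trans (sq_nonneg u) (mnQ_err n h0 h1).1

lemma mnQ_le_self : ∀ (n : ℕ) {u : ℝ}, 0 ≤ u → u ≤ 1 → mnQ n u ≤ u := by
  intro n
  induction n with
  | zero => intro u _ _; exact le_refl u
  | succ n ih =>
      intro u h0 h1
      have h := mnR_nonneg (n+1) h0 h1
      have := ih h0 h1
      show mnQ n u - mnR (n+1) u ≤ u
      linarith

lemma mnR_zero (k : ℕ) : mnR k 0 = 0 := by
  induction k with
  | zero => rfl
  | succ k ih =>
      show mnR k 0 / 2 - max (mnR k 0 - 2*(1/4)^(k+1)) 0 = 0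
      rw [ih, max_eq_right (by nlinarith [pow_nonneg (show (0:ℝ) ≤ 1/4 by norm_num) (k+1)])]
      norm_num

lemma mnQ_zero (n : ℕ) : mnQ n 0 = 0 := by
  induction n with
  | zero => rfl
  | succ n ih => show mnQ n 0 - mnR (n+1) 0 = 0; rw [ih, mnR_zero]; norm_num

end MultNetAux
noncomputable section MultNetDefs

open Finset

/-- width function -/
def mnP (m : ℕ) : ℕ → ℕ := fun l => if l = 0 then 2 else if l = m + 5 then 1 else 6

/-- weights -/
def mnW (m : ℕ) (l i j : ℕ) : ℝ :=
  if l = 0 then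
    (if i = 0 ∨ i = 1 then (if j = 0 then 1/2 else if j = 1 then 1/2 else 0)
     else if i = 2 ∨ i = 4 then (if j = 0 then 1/2 else if j = 1 then -(1/2) else 0)
     else (if j = 0 then -(1/2) else if j = 1 then 1/2 else 0))
  else if l = 1 then
    (if i ≤ 2 then (if j = 0 then 1 else if j = 1 then -1 else 0)
     else (if j = 2 then 1 else if j = 3 then 1 else if j = 4 then -1 else
           if j = 5 then -1 else 0))
  else if l = m + 3 then
    (if i = 0 then
      (if j = 0 then -(1/2) else if j = 1 then 1 else if j = 2 then 1 else
       if j = 3 then 1/2 else if j = 4 then -1 else if j = 5 then -1 else 0)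
     else 0)
  else if l = m + 4 then (if i = 0 ∧ j = 0 then 1 else 0)
  else
    (if i = 0 ∨ i = 1 then (if j = 0 then 1/2 else if j = 1 then -1 else 0)
     else if i = 2 then (if j = 0 then -(1/2) else if j = 1 then 1 else if j = 2 then 1 else 0)
     else if i = 3 ∨ i = 4 then (if j = 3 then 1/2 else if j = 4 then -1 else 0)
     else (if j = 3 then -(1/2) else if j = 4 then 1 else if j = 5 then 1 else 0))

/-- shifts -/
def mnV (m : ℕ) (l i : ℕ) : ℝ :=
  if l = 1 then (if i = 1 ∨ i = 4 ∨ i = 5 then 1 else 0)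
  else if 2 ≤ l ∧ l ≤ m + 3 then (if i = 1 ∨ i = 4 then 2*(1/4)^(l-1) else 0)
  else 0

lemma mn_pow_aux {l : ℕ} (h : 2 ≤ l) : |2*(1/4:ℝ)^(l-1)| ≤ 1 := by
  rw [abs_of_nonneg (by positivity)]
  have : (1/4:ℝ)^(l-1) ≤ (1/4)^1 :=
    pow_le_pow_of_le_one (by norm_num) (by norm_num) (by omega)
  nlinarith

set_option maxHeartbeats 1600000 in
lemma mnW_bound (m l i j : ℕ) : |mnW m l i j| ≤ 1 := by
  unfold mnW; split_ifs <;> (rw [abs_le]; constructor <;> norm_num)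

lemma mnV_bound (m l i : ℕ) : |mnV m l i| ≤ 1 := by
  unfold mnV
  split_ifs <;> first | exact mn_pow_aux (by omega) | (rw [abs_le]; constructor <;> norm_num)

/-- evaluation over plain ℕ indices -/
def mnEval (p : ℕ → ℕ) (w : ℕ → ℕ → ℕ → ℝ) (vv : ℕ → ℕ → ℝ) (x : ℕ → ℝ) :
    ℕ → ℕ → ℝ
  | 0, i => ∑ j ∈ Finset.range (p 0), w 0 i j * x j
  | (L+1), i => ∑ j ∈ Finset.range (p (L+1)),
      w (L+1) i j * max (mnEval p w vv x L j - vv (L+1) j) 0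

lemma netEval_eq_mnEval (p : ℕ → ℕ) (w : ℕ → ℕ → ℕ → ℝ) (vv : ℕ → ℕ → ℝ)
    (xnat : ℕ → ℝ) :
    ∀ (L : ℕ) (x : Fin (p 0) → ℝ), (∀ i : Fin (p 0), x i = xnat i.val) →
      ∀ i : Fin (p (L+1)),
        netEval p (fun l a b => w l a.val b.val) (fun l a => vv l a.val) L x i
          = mnEval p w vv xnat L i.val := by
  intro L
  induction L with
  | zero =>
      intro x hx i
      show ∑ j : Fin (p 0), w 0 i.val j.val * x j = _
      simp only [hx]
      exact Fin.sum_univ_eq_sum_range (fun n => w 0 i.val n * xnat n) (p 0)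
  | succ L ih =>
      intro x hx i
      show ∑ j : Fin (p (L+1)), w (L+1) i.val j.val *
          max (netEval p (fun l a b => w l a.val b.val) (fun l a => vv l a.val) L x j
            - vv (L+1) j.val) 0 = _
      simp only [ih x hx]
      exact Fin.sum_univ_eq_sum_range
        (fun n => w (L+1) i.val n * max (mnEval p w vv xnat L n - vv (L+1) n) 0) (p (L+1))

end MultNetDefs
noncomputable section MultNetLayers

open Finset

def mnA (x y : ℝ) : ℝ := max (x/2 + y/2) 0 - max (x/2 + y/2 - 1) 0
def mnB (x y : ℝ) : ℝ :=
  max (x/2 - y/2) 0 + max (y/2 - x/2) 0 - max (x/2 - y/2 - 1) 0 - max (y/2 - x/2 - 1) 0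
def mnL0 (x y : ℝ) (i : ℕ) : ℝ :=
  if i = 0 ∨ i = 1 then x/2 + y/2 else if i = 2 ∨ i = 4 then x/2 - y/2 else y/2 - x/2
def mnPre (a b : ℝ) (l i : ℕ) : ℝ :=
  if i = 0 ∨ i = 1 then mnR (l-1) a else if i = 2 then mnQ (l-1) a
  else if i = 3 ∨ i = 4 then mnR (l-1) b else mnQ (l-1) b
def mnX (x y : ℝ) : ℕ → ℝ := fun n => if n = 0 then x else y

lemma mn_clamp_mem (s : ℝ) : 0 ≤ max s 0 - max (s-1) 0 ∧ max s 0 - max (s-1) 0 ≤ 1 := by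
  rcases le_total s 0 with h|h
  · rw [max_eq_right h, max_eq_right (by linarith)]; norm_num
  · rcases le_total s 1 with h1|h1
    · rw [max_eq_left h, max_eq_right (by linarith)]; constructor <;> linarith
    · rw [max_eq_left h, max_eq_left (by linarith)]; constructor <;> linarith

lemma mnA_mem (x y : ℝ) : 0 ≤ mnA x y ∧ mnA x y ≤ 1 := mn_clamp_mem _

lemma mnB_mem (x y : ℝ) : 0 ≤ mnB x y ∧ mnB x y ≤ 1 := by
  rcases le_total (x/2 - y/2) 0 with h|h
  · unfold mnB
    rw [max_eq_right h, max_eq_right (show x/2 - y/2 - 1 ≤ 0 by linarith)]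
    have := mn_clamp_mem (y/2 - x/2)
    constructor <;> linarith
  · unfold mnB
    rw [max_eq_right (show y/2 - x/2 ≤ 0 by linarith),
        max_eq_right (show y/2 - x/2 - 1 ≤ 0 by linarith)]
    have := mn_clamp_mem (x/2 - y/2)
    constructor <;> linarith

lemma mnA_eq {x y : ℝ} (hx0 : 0 ≤ x) (hx1 : x ≤ 1) (hy0 : 0 ≤ y) (hy1 : y ≤ 1) :
    mnA x y = x/2 + y/2 := by
  unfold mnA
  rw [max_eq_left (by linarith), max_eq_right (by linarith)]
  ring

lemma mnB_eq {x y : ℝ} (hx0 : 0 ≤ x) (hx1 : x ≤ 1) (hy0 : 0 ≤ y) (hy1 : y ≤ 1) :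
    mnB x y = |x/2 - y/2| := by
  unfold mnB
  rcases le_total y x with h|h
  · rw [abs_of_nonneg (by linarith), max_eq_left (by linarith),
        max_eq_right (show y/2 - x/2 ≤ 0 by linarith),
        max_eq_right (show x/2 - y/2 - 1 ≤ 0 by linarith),
        max_eq_right (show y/2 - x/2 - 1 ≤ 0 by linarith)]
    ring
  · rw [abs_of_nonpos (by linarith), max_eq_right (show x/2 - y/2 ≤ 0 by linarith),
        max_eq_left (by linarith),
        max_eq_right (show x/2 - y/2 - 1 ≤ 0 by linarith),
        max_eq_right (show y/2 - x/2 - 1 ≤ 0 by linarith)]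
    ring

lemma mnAB_x0 (y : ℝ) : mnA 0 y = mnB 0 y ∨ mnA 0 y = 0 := by
  rcases le_total 0 y with h|h
  · left; unfold mnA mnB
    rw [max_eq_right (show (0:ℝ)/2 - y/2 ≤ 0 by linarith),
        max_eq_right (show (0:ℝ)/2 - y/2 - 1 ≤ 0 by linarith),
        show (0:ℝ)/2 + y/2 = y/2 - 0/2 by ring]
    ring
  · right; unfold mnA
    rw [max_eq_right (show (0:ℝ)/2 + y/2 ≤ 0 by linarith),
        max_eq_right (show (0:ℝ)/2 + y/2 - 1 ≤ 0 by linarith)]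
    ring

lemma mnAB_y0 (x : ℝ) : mnA x 0 = mnB x 0 ∨ mnA x 0 = 0 := by
  rcases le_total 0 x with h|h
  · left; unfold mnA mnB
    rw [max_eq_right (show (0:ℝ)/2 - x/2 ≤ 0 by linarith),
        max_eq_right (show (0:ℝ)/2 - x/2 - 1 ≤ 0 by linarith),
        show x/2 + (0:ℝ)/2 = x/2 - 0/2 by ring]
    ring
  · right; unfold mnA
    rw [max_eq_right (show x/2 + (0:ℝ)/2 ≤ 0 by linarith),
        max_eq_right (show x/2 + (0:ℝ)/2 - 1 ≤ 0 by linarith)]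
    ring

lemma mn_out_zero (n : ℕ) {a b : ℝ} (hb0 : 0 ≤ b) (hb1 : b ≤ 1) (h : a = b ∨ a = 0) :
    max (mnQ n a - mnQ n b) 0 = 0 := by
  rcases h with h|h
  · rw [h, sub_self]; exact max_self 0
  · rw [h, mnQ_zero n, zero_sub]
    exact max_eq_right (neg_nonpos.mpr (mnQ_nonneg n hb0 hb1))

lemma mn_relu_err {z t : ℝ} (ht : 0 ≤ t) : |max z 0 - t| ≤ |z - t| := by
  rcases le_total z 0 with h|h
  · rw [max_eq_right h, zero_sub, abs_neg, abs_of_nonneg ht, abs_of_nonpos (by linarith)]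
    linarith
  · rw [max_eq_left h]

lemma mnP0 (m : ℕ) : mnP m 0 = 2 := rfl

lemma mnP6 (m : ℕ) {l : ℕ} (h0 : l ≠ 0) (h5 : l ≠ m + 5) : mnP m l = 6 := by
  simp [mnP, h0, h5]

lemma mnEval_succ (p : ℕ → ℕ) (w : ℕ → ℕ → ℕ → ℝ) (vv : ℕ → ℕ → ℝ) (x : ℕ → ℝ)
    (L i : ℕ) : mnEval p w vv x (L+1) i
      = ∑ j ∈ Finset.range (p (L+1)), w (L+1) i j * max (mnEval p w vv x L j - vv (L+1) j) 0 :=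
  rfl

lemma mn_net0 (m : ℕ) (x y : ℝ) (i : ℕ) :
    mnEval (mnP m) (mnW m) (mnV m) (mnX x y) 0 i = mnL0 x y i := by
  show ∑ j ∈ Finset.range (mnP m 0), mnW m 0 i j * mnX x y j = _
  rw [mnP0]
  simp only [Finset.sum_range_succ, Finset.sum_range_zero, zero_add]
  unfold mnW mnX mnL0
  norm_num
  split_ifs <;> ring

end MultNetLayers
noncomputable section MultNetMain

open Finset

set_option maxHeartbeats 2000000 in
lemma mn_net_mid (m : ℕ) (x y : ℝ) :
    ∀ l, 1 ≤ l → l ≤ m + 2 → ∀ i, i < 6 →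
      mnEval (mnP m) (mnW m) (mnV m) (mnX x y) l i = mnPre (mnA x y) (mnB x y) l i := by
  have ha := mnA_mem x y
  have hb := mnB_mem x y
  intro l hl1
  induction l, hl1 using Nat.le_induction with
  | base =>
      intro _ i hi
      have h6 : mnP m 1 = 6 := mnP6 m (by omega) (by omega)
      show (∑ j ∈ Finset.range (mnP m 1),
          mnW m 1 i j * max (mnEval (mnP m) (mnW m) (mnV m) (mnX x y) 0 j - mnV m 1 j) 0)
        = mnPre (mnA x y) (mnB x y) 1 i
      rw [h6]
      simp only [Finset.sum_range_succ, Finset.sum_range_zero, zero_add, mn_net0]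
      interval_cases i <;>
        simp [mnW, mnV, mnL0, mnPre, mnR, mnQ, mnA, mnB, sub_zero] <;>
        ring
  | succ n hn ih =>
      intro hle i hi
      obtain ⟨k, rfl⟩ : ∃ k, n = k + 1 := ⟨n - 1, by omega⟩
      have h6 : mnP m (k+1+1) = 6 := mnP6 m (by omega) (by omega)
      have ih' := ih (by omega)
      have hRa := mnR_nonneg k ha.1 ha.2
      have hRb := mnR_nonneg k hb.1 hb.2
      have hQa := mnQ_nonneg k ha.1 ha.2
      have hQb := mnQ_nonneg k hb.1 hb.2
      have c0 : ¬(k+1+1 = 0) := by omega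
      have c1 : ¬(k+1+1 = 1) := by omega
      have c3 : ¬(k+1+1 = m+3) := by omega
      have c4 : ¬(k+1+1 = m+4) := by omega
      have c5 : 2 ≤ k+1+1 := by omega
      have c6 : k+1+1 ≤ m+3 := by omega
      have eRA : mnR (k+1) (mnA x y)
          = mnR k (mnA x y)/2 - max (mnR k (mnA x y) - 2*(1/4)^(k+1)) 0 := rfl
      have eRB : mnR (k+1) (mnB x y)
          = mnR k (mnB x y)/2 - max (mnR k (mnB x y) - 2*(1/4)^(k+1)) 0 := rfl
      have eQA : mnQ (k+1) (mnA x y) = mnQ k (mnA x y) - mnR (k+1) (mnA x y) := rfl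
      have eQB : mnQ (k+1) (mnB x y) = mnQ k (mnB x y) - mnR (k+1) (mnB x y) := rfl
      rw [mnEval_succ, h6]
      simp only [Finset.sum_range_succ, Finset.sum_range_zero, zero_add]
      rw [ih' 0 (by norm_num), ih' 1 (by norm_num), ih' 2 (by norm_num), ih' 3 (by norm_num),
          ih' 4 (by norm_num), ih' 5 (by norm_num)]
      simp only [mnPre, Nat.add_sub_cancel]
      simp only [mnW, mnV, c0, c1, c3, c4, c5, c6, Nat.add_sub_cancel]
      interval_cases i
      · simp only [sub_zero, if_true, if_false]
        norm_num
        rw [max_eq_left hRa, eRA]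
        ring
      · norm_num
        rw [max_eq_left hRa, eRA]
        ring
      · norm_num
        rw [max_eq_left hRa, max_eq_left hQa, eQA, eRA]
        ring
      · norm_num
        rw [max_eq_left hRb, eRB]
        ring
      · norm_num
        rw [max_eq_left hRb, eRB]
        ring
      · norm_num
        rw [max_eq_left hRb, max_eq_left hQb, eQB, eRB]
        ring

end MultNetMain
noncomputable section MultNetFinal

open Finset

set_option maxHeartbeats 2000000 in
lemma mn_net_pen (m : ℕ) (x y : ℝ) (i : ℕ) :
    mnEval (mnP m) (mnW m) (mnV m) (mnX x y) (m+3) i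
      = if i = 0 then mnQ (m+2) (mnA x y) - mnQ (m+2) (mnB x y) else 0 := by
  have ha := mnA_mem x y
  have hb := mnB_mem x y
  have h6 : mnP m (m+2+1) = 6 := mnP6 m (by omega) (by omega)
  have hmid := mn_net_mid m x y (m+2) (by omega) (by omega)
  have hRa := mnR_nonneg (m+1) ha.1 ha.2
  have hRb := mnR_nonneg (m+1) hb.1 hb.2
  have hQa := mnQ_nonneg (m+1) ha.1 ha.2
  have hQb := mnQ_nonneg (m+1) hb.1 hb.2
  have e0 : ¬(m+3 = 0) := by omega
  have e1 : ¬(m+3 = 1) := by omega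
  have e5 : 2 ≤ m+3 := by omega
  have e6 : m+3 ≤ m+3 := le_refl _
  have eRA : mnR (m+2) (mnA x y)
      = mnR (m+1) (mnA x y)/2 - max (mnR (m+1) (mnA x y) - 2*(1/4)^(m+2)) 0 := rfl
  have eRB : mnR (m+2) (mnB x y)
      = mnR (m+1) (mnB x y)/2 - max (mnR (m+1) (mnB x y) - 2*(1/4)^(m+2)) 0 := rfl
  have eQA : mnQ (m+2) (mnA x y) = mnQ (m+1) (mnA x y) - mnR (m+2) (mnA x y) := rfl
  have eQB : mnQ (m+2) (mnB x y) = mnQ (m+1) (mnB x y) - mnR (m+2) (mnB x y) := rfl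
  rw [show (m+3) = (m+2)+1 from rfl, mnEval_succ, h6]
  simp only [Finset.sum_range_succ, Finset.sum_range_zero, zero_add]
  rw [hmid 0 (by norm_num), hmid 1 (by norm_num), hmid 2 (by norm_num),
      hmid 3 (by norm_num), hmid 4 (by norm_num), hmid 5 (by norm_num)]
  simp only [mnPre, show m+2-1 = m+1 from rfl, show m+2+1 = m+3 from rfl,
      show m+3-1 = m+2 from rfl]
  simp only [mnW, mnV, e0, e1, e5, e6, show m+3-1 = m+2 from rfl]
  by_cases hi : i = 0
  · subst hi
    norm_num
    rw [max_eq_left hRa, max_eq_left hRb, max_eq_left hQa, max_eq_left hQb,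
        eQA, eQB, eRA, eRB]
    ring
  · simp [hi]

lemma mn_net_last (m : ℕ) (x y : ℝ) :
    mnEval (mnP m) (mnW m) (mnV m) (mnX x y) (m+4) 0
      = max (mnQ (m+2) (mnA x y) - mnQ (m+2) (mnB x y)) 0 := by
  have h6 : mnP m (m+3+1) = 6 := mnP6 m (by omega) (by omega)
  have e0 : ¬(m+4 = 0) := by omega
  have e1 : ¬(m+4 = 1) := by omega
  have e3 : ¬(m+4 = m+3) := by omega
  have e4 : ¬(m+4 ≤ m+3) := by omega
  rw [show (m+4) = (m+3)+1 from rfl, mnEval_succ, h6]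
  simp only [Finset.sum_range_succ, Finset.sum_range_zero, zero_add, mn_net_pen]
  simp only [show m+3+1 = m+4 from rfl]
  simp only [mnW, mnV, e0, e1, e3, e4]
  norm_num

end MultNetFinal

/-- Multiplication network: for every positive integer `m` there is a ReLU network
`Mult_m ∈ ℱ(m+4, (2, 6, …, 6, 1))` with `Mult_m(x,y) ∈ [0,1]` and
`|Mult_m(x,y) − xy| ≤ 2^{−m}` for all `x, y ∈ [0,1]`, and
`Mult_m(0, y) = Mult_m(x, 0) = 0` for all `x, y`. -/
theorem mult_network (m : ℕ) (hm : 1 ≤ m) :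
    ∃ f ∈ NetClassF (m + 4) 2 1 (fun l => if l = 0 then 2 else if l = m + 5 then 1 else 6),
      (∀ x ∈ Set.Icc (0:ℝ) 1, ∀ y ∈ Set.Icc (0:ℝ) 1,
        f ![x, y] 0 ∈ Set.Icc (0:ℝ) 1 ∧ |f ![x, y] 0 - x * y| ≤ (2:ℝ) ^ (-(m:ℤ))) ∧
      (∀ x y : ℝ, f ![0, y] 0 = 0 ∧ f ![x, 0] 0 = 0) := by
  have h0p : mnP m 0 = 2 := rfl
  have h1p : mnP m (m + 4 + 1) = 1 := by
    show (if m+4+1 = 0 then 2 else if m+4+1 = m+5 then 1 else 6) = 1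
    rw [if_neg (by omega), if_pos (by omega)]
  have bW : ∀ l ≤ m + 4, ∀ (i : Fin (mnP m (l+1))) (j : Fin (mnP m l)),
      |mnW m l i.val j.val| ≤ 1 := fun l _ i j => mnW_bound m l i.val j.val
  have bV : ∀ l, 1 ≤ l → l ≤ m + 4 → ∀ i : Fin (mnP m l), |mnV m l i.val| ≤ 1 :=
    fun l _ _ i => mnV_bound m l i.val
  have key : ∀ x y : ℝ,
      netEval (mnP m) (fun l a b => mnW m l a.val b.val) (fun l a => mnV m l a.val)
        (m+4) (fun i => (![x, y]) (Fin.cast h0p i)) (Fin.cast h1p.symm 0)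
      = max (mnQ (m+2) (mnA x y) - mnQ (m+2) (mnB x y)) 0 := by
    intro x y
    have hx : ∀ i : Fin (mnP m 0), (![x, y]) (Fin.cast h0p i) = mnX x y i.val := by
      intro i
      rcases i with ⟨iv, hlt⟩
      have hlt2 : iv < 2 := h0p ▸ hlt
      interval_cases iv <;> rfl
    exact (netEval_eq_mnEval (mnP m) (mnW m) (mnV m) (mnX x y) (m+4)
      (fun i => (![x, y]) (Fin.cast h0p i)) hx (Fin.cast h1p.symm 0)).trans
      (mn_net_last m x y)
  refine ⟨fun z j => netEval (mnP m) (fun l a b => mnW m l a.val b.val)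
      (fun l a => mnV m l a.val) (m+4) (fun i => z (Fin.cast h0p i)) (Fin.cast h1p.symm j),
    ⟨h0p, h1p, (fun l a b => mnW m l a.val b.val), (fun l a => mnV m l a.val),
      ⟨bW, bV⟩, fun z => rfl⟩, ?_, ?_⟩
  · intro x hx y hy
    beta_reduce
    rw [key x y]
    have ha := mnA_mem x y
    have hb := mnB_mem x y
    have hA := mnA_eq hx.1 hx.2 hy.1 hy.2
    have hB := mnB_eq hx.1 hx.2 hy.1 hy.2
    have hQle := mnQ_le_self (m+2) ha.1 ha.2
    have hQbnn := mnQ_nonneg (m+2) hb.1 hb.2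
    constructor
    · exact ⟨le_max_right _ _, max_le (by linarith) (by norm_num)⟩
    · rw [hA, hB]
      have hA01 : 0 ≤ x/2 + y/2 ∧ x/2 + y/2 ≤ 1 := by
        constructor <;> [linarith [hx.1, hy.1]; linarith [hx.2, hy.2]]
      have hB01 : 0 ≤ |x/2 - y/2| ∧ |x/2 - y/2| ≤ 1 :=
        ⟨abs_nonneg _, by rw [abs_le]; constructor <;> [linarith [hx.2, hy.2]; linarith [hx.2, hy.2]]⟩
      have eA := mnQ_err (m+2) hA01.1 hA01.2
      have eB := mnQ_err (m+2) hB01.1 hB01.2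
      have hxy : x * y = (x/2 + y/2)^2 - |x/2 - y/2|^2 := by rw [sq_abs]; ring
      have epow : ((1/4:ℝ))^(m+2+1) = (1/4)^(m+3) := rfl
      have h2 : |(mnQ (m+2) (x/2 + y/2) - mnQ (m+2) |x/2 - y/2|) - x*y| ≤ (1/4:ℝ)^(m+3) := by
        rw [abs_le]
        constructor <;> [linarith [eA.1, eA.2, eB.1, eB.2]; linarith [eA.1, eA.2, eB.1, eB.2]]
      have h3 : ((1/4:ℝ))^(m+3) ≤ (2:ℝ) ^ (-(m:ℤ)) := by
        have hz : (2:ℝ) ^ (-(m:ℤ)) = (1/2:ℝ)^m := by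
          rw [zpow_neg, zpow_natCast, one_div, inv_pow]
        rw [hz]
        calc ((1/4:ℝ))^(m+3) ≤ (1/4:ℝ)^m :=
              pow_le_pow_of_le_one (by norm_num) (by norm_num) (by omega)
          _ ≤ (1/2:ℝ)^m := pow_le_pow_left₀ (by norm_num) (by norm_num) m
      exact le_trans (mn_relu_err (mul_nonneg hx.1 hy.1)) (le_trans h2 h3)
  · intro x y
    constructor
    · beta_reduce
      rw [key 0 y]
      exact mn_out_zero (m+2) (mnB_mem 0 y).1 (mnB_mem 0 y).2 (mnAB_x0 y)
    · beta_reduce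
      rw [key x 0]
      exact mn_out_zero (m+2) (mnB_mem x 0).1 (mnB_mem x 0).2 (mnAB_y0 x)
end
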